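/- arXiv:1807.04428 — 4 statements merged into one kernel-verified Lean document; each statement's English description precedes it below -/
import Mathlib

section
/- (Gradient dominates the optimality gap near a stationary point with quadratic decay.) Let σ̄ ∈ M_r be a stationary point at which f satisfies quadratic decay with constant μ > 0. Let u ∈ T_σ̄ M_r with ‖u‖_F = 1 and u Frobenius-orthogonal to V_σ̄, and let 0 ≤ t ≤ 1. Then ‖grad f(σ̄(t))‖_F² ≥ (μ/n) (f(σ̄) − f(σ̄(t))) − t³ ‖A‖₁ (3μ + 88 n ‖A‖₁). -/
open scoped BigOperators RealInnerProductSpace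
open Finset Matrix

noncomputable section

/-- Points on the sphere live in Euclidean space `ℝ^r`. -/
abbrev Pt (r : ℕ) := EuclideanSpace ℝ (Fin r)

/-- A configuration: `n` rows, each a vector in `ℝ^r`. -/
abbrev Conf (n r : ℕ) := Fin n → Pt r

/-- Membership in the manifold `M_r`: all rows are unit vectors. -/
def inM {n r : ℕ} (σ : Conf n r) : Prop := ∀ i, ‖σ i‖ = 1

/-- `g_i(σ) = ∑_{j ≠ i} A_{ij} σ_j`. -/
def gvec {n r : ℕ} (A : Matrix (Fin n) (Fin n) ℝ) (σ : Conf n r) (i : Fin n) : Pt r :=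
  ∑ j ∈ univ.erase i, A i j • σ j

/-- The objective `f(σ) = ⟨A, σσᵀ⟩ = ∑_{i,j} A_{ij} ⟨σ_i, σ_j⟩`. -/
def fval {n r : ℕ} (A : Matrix (Fin n) (Fin n) ℝ) (σ : Conf n r) : ℝ :=
  ∑ i, ∑ j, A i j * ⟪σ i, σ j⟫

/-- The BCM update `T_i(σ)`: replace row `i` by `g_i(σ)/‖g_i(σ)‖`
    (unchanged if `g_i(σ) = 0`). -/
def Tupd {n r : ℕ} (A : Matrix (Fin n) (Fin n) ℝ) (σ : Conf n r) (i : Fin n) : Conf n r :=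
  letI := Classical.dec (gvec A σ i = 0)
  Function.update σ i (if gvec A σ i = 0 then σ i else ‖gvec A σ i‖⁻¹ • gvec A σ i)

/-- `‖A‖₁ = max_j ∑_i |A_{ij}|`. -/
def Anorm1 {n : ℕ} (A : Matrix (Fin n) (Fin n) ℝ) : ℝ := ⨆ j, ∑ i, |A i j|

/-- `‖A‖_{1,1} = ∑_{i,j} |A_{ij}|`. -/
def Anorm11 {n : ℕ} (A : Matrix (Fin n) (Fin n) ℝ) : ℝ := ∑ i, ∑ j, |A i j|

/-- Squared Riemannian gradient norm
    `‖grad f(σ)‖_F² = 2 ∑_i (‖g_i‖² − ⟨σ_i, g_i⟩²)`. -/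
def gradNormSq {n r : ℕ} (A : Matrix (Fin n) (Fin n) ℝ) (σ : Conf n r) : ℝ :=
  2 * ∑ i, (‖gvec A σ i‖ ^ 2 - ⟪σ i, gvec A σ i⟫ ^ 2)

/-- The geodesic through `σ` in direction `u`, at time `t`:
    `σ_i(t) = σ_i cos(‖u_i‖ t) + (u_i/‖u_i‖) sin(‖u_i‖ t)` (rows with `u_i = 0` stay fixed). -/
def geo {n r : ℕ} (σ u : Conf n r) (t : ℝ) : Conf n r :=
  fun i => Real.cos (‖u i‖ * t) • σ i + (Real.sin (‖u i‖ * t) / ‖u i‖) • u i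

/-- Tangency: `u ∈ T_σ M_r` iff every row of `u` is orthogonal to the
    corresponding row of `σ`. -/
def tangent {n r : ℕ} (σ u : Conf n r) : Prop := ∀ i, ⟪u i, σ i⟫ = 0

/-- Squared Frobenius norm `‖u‖_F² = ∑_i ‖u_i‖²`. -/
def fnormSq {n r : ℕ} (u : Conf n r) : ℝ := ∑ i, ‖u i‖ ^ 2

/-- Riemannian gradient pairing `G_σ(u) = 2 ∑_i ⟨u_i, g_i(σ)⟩`. -/
def Gform {n r : ℕ} (A : Matrix (Fin n) (Fin n) ℝ) (σ u : Conf n r) : ℝ :=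
  2 * ∑ i, ⟪u i, gvec A σ i⟫

/-- Riemannian Hessian quadratic form
    `H_σ(u) = 2 ∑_i (⟨u_i, v_i⟩ − ‖u_i‖² ⟨σ_i, g_i(σ)⟩)` with `v_i = ∑_{j≠i} A_{ij} u_j`. -/
def Hform {n r : ℕ} (A : Matrix (Fin n) (Fin n) ℝ) (σ u : Conf n r) : ℝ :=
  2 * ∑ i, (⟪u i, gvec A u i⟫ - ‖u i‖ ^ 2 * ⟪σ i, gvec A σ i⟫)

/-- Stationary point: `g_i(σ) ≠ 0` and `σ_i = g_i(σ)/‖g_i(σ)‖` for all `i`. -/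
def stationary {n r : ℕ} (A : Matrix (Fin n) (Fin n) ℝ) (σ : Conf n r) : Prop :=
  ∀ i, gvec A σ i ≠ 0 ∧ σ i = ‖gvec A σ i‖⁻¹ • gvec A σ i

/-- `w ∈ V_σ = {σB : Bᵀ = −B}` (rows of `σB` given by `(σB)_{ik} = ∑_l σ_{il} B_{lk}`). -/
def inV {n r : ℕ} (σ w : Conf n r) : Prop :=
  ∃ B : Matrix (Fin r) (Fin r) ℝ, Bᵀ = -B ∧ ∀ i k, w i k = ∑ l, σ i l * B l k

/-- Frobenius-orthogonality of `u` to the subspace `V_σ`. -/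
def perpV {n r : ℕ} (σ u : Conf n r) : Prop :=
  ∀ w : Conf n r, inV σ w → ∑ i, ⟪u i, w i⟫ = 0

/-- `f` satisfies quadratic decay at `σ` with constant `μ`:
    `H_σ(u) ≤ −μ ‖u‖_F²` for all tangent `u` Frobenius-orthogonal to `V_σ`. -/
def quadDecay {n r : ℕ} (A : Matrix (Fin n) (Fin n) ℝ) (σ : Conf n r) (μ : ℝ) : Prop :=
  ∀ u : Conf n r, tangent σ u → perpV σ u → Hform A σ u ≤ -μ * fnormSq u

/-- Geodesic distance `dist(σ, σ') = (∑_i arccos⟨σ_i, σ'_i⟩²)^{1/2}`. -/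
def gdist {n r : ℕ} (σ σ' : Conf n r) : ℝ :=
  Real.sqrt (∑ i, Real.arccos ⟪σ i, σ' i⟫ ^ 2)

/-- Right-multiplication of a configuration by a matrix `Q ∈ ℝ^{r×r}` (rowwise). -/
def rowMulQ {n r : ℕ} (σ : Conf n r) (Q : Matrix (Fin r) (Fin r) ℝ) : Conf n r :=
  fun i => (EuclideanSpace.equiv (Fin r) ℝ).symm (fun k => ∑ l, σ i l * Q l k)

/-- Distance to the equivalence class `[σ'] = {σ'Q : Q ∈ O(r)}`. -/
def distClass {n r : ℕ} (σ σ' : Conf n r) : ℝ :=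
  ⨅ Q : {Q : Matrix (Fin r) (Fin r) ℝ // Qᵀ * Q = 1}, gdist σ (rowMulQ σ' Q.1)

/-- `f* = sup_{σ ∈ M_r} f(σ)`. -/
def fstar {n r : ℕ} (A : Matrix (Fin n) (Fin n) ℝ) : ℝ :=
  sSup (fval A '' {σ : Conf n r | inM σ})

/-- The optimal value of the SDP with unit-diagonal constraints. -/
def SDPval {n : ℕ} (A : Matrix (Fin n) (Fin n) ℝ) : ℝ :=
  sSup {y | ∃ X : Matrix (Fin n) (Fin n) ℝ, X.PosSemidef ∧ (∀ i, X i i = 1) ∧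
    y = ∑ i, ∑ j, A i j * X i j}

/-- BCM iterates along a sequence of coordinates `ω`. -/
def iterSeq {n r : ℕ} (A : Matrix (Fin n) (Fin n) ℝ) (σ0 : Conf n r) (ω : ℕ → Fin n) :
    ℕ → Conf n r
  | 0 => σ0
  | k + 1 => Tupd A (iterSeq A σ0 ω k) (ω k)

/-- The set of rows where `u` is nonzero. -/
def suppu {n r : ℕ} (u : Conf n r) : Finset (Fin n) :=
  letI := Classical.decPred (fun i : Fin n => u i ≠ 0)
  Finset.univ.filter (fun i : Fin n => u i ≠ 0)


section auxlemmas

variable {n r : ℕ}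

lemma gvec_eq_sum (A : Matrix (Fin n) (Fin n) ℝ) (hdiag : ∀ i, A i i = 0)
    (σ : Conf n r) (i : Fin n) : gvec A σ i = ∑ j, A i j • σ j := by
  unfold gvec
  exact Finset.sum_erase _ (by simp [hdiag i])

lemma inner_gvec (A : Matrix (Fin n) (Fin n) ℝ) (hdiag : ∀ i, A i i = 0)
    (σ : Conf n r) (x : Pt r) (i : Fin n) :
    ⟪x, gvec A σ i⟫ = ∑ j, A i j * ⟪x, σ j⟫ := by
  rw [gvec_eq_sum A hdiag, inner_sum]
  exact Finset.sum_congr rfl fun j _ => real_inner_smul_right _ _ _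

lemma gvec_norm_le (A : Matrix (Fin n) (Fin n) ℝ) (hdiag : ∀ i, A i i = 0)
    (σ : Conf n r) (i : Fin n) : ‖gvec A σ i‖ ≤ ∑ j, |A i j| * ‖σ j‖ := by
  rw [gvec_eq_sum A hdiag]
  refine (norm_sum_le _ _).trans (le_of_eq ?_)
  simp [norm_smul]

lemma sum_inner_gvec (A : Matrix (Fin n) (Fin n) ℝ) (hdiag : ∀ i, A i i = 0)
    (p q : Conf n r) :
    ∑ i, ⟪p i, gvec A q i⟫ = ∑ i, ∑ j, A i j * ⟪p i, q j⟫ :=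
  Finset.sum_congr rfl fun i _ => inner_gvec A hdiag q (p i) i

lemma sum_inner_gvec_symm (A : Matrix (Fin n) (Fin n) ℝ) (hA : A.IsSymm)
    (hdiag : ∀ i, A i i = 0) (p q : Conf n r) :
    ∑ i, ⟪p i, gvec A q i⟫ = ∑ i, ⟪q i, gvec A p i⟫ := by
  rw [sum_inner_gvec A hdiag, sum_inner_gvec A hdiag, Finset.sum_comm]
  refine Finset.sum_congr rfl fun i _ => Finset.sum_congr rfl fun j _ => ?_
  rw [hA.apply, real_inner_comm]

lemma abs_sum_inner_le (p q : Conf n r) (A : Matrix (Fin n) (Fin n) ℝ)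
    (hdiag : ∀ i, A i i = 0) (xp xq : Fin n → ℝ)
    (hp : ∀ i, ‖p i‖ ≤ xp i) (hq : ∀ i, ‖q i‖ ≤ xq i) :
    |∑ i, ⟪p i, gvec A q i⟫| ≤ ∑ i, ∑ j, |A i j| * (xp i * xq j) := by
  rw [sum_inner_gvec A hdiag]
  refine (Finset.abs_sum_le_sum_abs _ _).trans ?_
  refine Finset.sum_le_sum fun i _ => ?_
  refine (Finset.abs_sum_le_sum_abs _ _).trans ?_
  refine Finset.sum_le_sum fun j _ => ?_
  rw [abs_mul]
  have h1 : |⟪p i, q j⟫| ≤ ‖p i‖ * ‖q j‖ := abs_real_inner_le_norm _ _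
  have h2 : ‖p i‖ * ‖q j‖ ≤ xp i * xq j :=
    mul_le_mul (hp i) (hq j) (norm_nonneg _) ((norm_nonneg (p i)).trans (hp i))
  exact mul_le_mul_of_nonneg_left (h1.trans h2) (abs_nonneg _)

lemma col_le_Anorm1 (hn : 0 < n) (A : Matrix (Fin n) (Fin n) ℝ) (j : Fin n) :
    ∑ i, |A i j| ≤ Anorm1 A := by
  have : Nonempty (Fin n) := ⟨⟨0, hn⟩⟩
  exact le_ciSup (f := fun j => ∑ i, |A i j|)
    (Set.Finite.bddAbove (Set.finite_range _)) j

lemma row_le_Anorm1 (hn : 0 < n) (A : Matrix (Fin n) (Fin n) ℝ) (hA : A.IsSymm)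
    (i : Fin n) : ∑ j, |A i j| ≤ Anorm1 A := by
  have h : ∑ j, |A i j| = ∑ j, |A j i| :=
    Finset.sum_congr rfl fun j _ => by rw [hA.apply]
  rw [h]
  exact col_le_Anorm1 hn A i

lemma Anorm1_nonneg (hn : 0 < n) (A : Matrix (Fin n) (Fin n) ℝ) : 0 ≤ Anorm1 A :=
  le_trans (Finset.sum_nonneg fun i _ => abs_nonneg _) (col_le_Anorm1 hn A ⟨0, hn⟩)

lemma dsum_le_left (A : Matrix (Fin n) (Fin n) ℝ) (a D : ℝ) (c d : Fin n → ℝ)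
    (hrow : ∀ i, ∑ j, |A i j| ≤ a) (hc : ∀ i, 0 ≤ c i) (hd : ∀ j, 0 ≤ d j)
    (hD : ∀ j, d j ≤ D) (hD0 : 0 ≤ D) :
    ∑ i, ∑ j, |A i j| * (c i * d j) ≤ a * D * ∑ i, c i := by
  have step : ∀ i, ∑ j, |A i j| * (c i * d j) ≤ a * D * c i := by
    intro i
    calc ∑ j, |A i j| * (c i * d j) ≤ ∑ j, |A i j| * (c i * D) :=
          Finset.sum_le_sum fun j _ => mul_le_mul_of_nonneg_left
            (mul_le_mul_of_nonneg_left (hD j) (hc i)) (abs_nonneg _)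
      _ = (∑ j, |A i j|) * (c i * D) := by rw [Finset.sum_mul]
      _ ≤ a * (c i * D) := mul_le_mul_of_nonneg_right (hrow i)
            (mul_nonneg (hc i) hD0)
      _ = a * D * c i := by ring
  calc ∑ i, ∑ j, |A i j| * (c i * d j) ≤ ∑ i, a * D * c i :=
        Finset.sum_le_sum fun i _ => step i
    _ = a * D * ∑ i, c i := by rw [Finset.mul_sum]

lemma dsum_le_right (A : Matrix (Fin n) (Fin n) ℝ) (a C : ℝ) (c d : Fin n → ℝ)
    (hcol : ∀ j, ∑ i, |A i j| ≤ a) (hc : ∀ i, 0 ≤ c i) (hd : ∀ j, 0 ≤ d j)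
    (hC : ∀ i, c i ≤ C) (hC0 : 0 ≤ C) :
    ∑ i, ∑ j, |A i j| * (c i * d j) ≤ a * C * ∑ j, d j := by
  rw [Finset.sum_comm]
  have step : ∀ j, ∑ i, |A i j| * (c i * d j) ≤ a * C * d j := by
    intro j
    calc ∑ i, |A i j| * (c i * d j) ≤ ∑ i, |A i j| * (C * d j) :=
          Finset.sum_le_sum fun i _ => mul_le_mul_of_nonneg_left
            (mul_le_mul_of_nonneg_right (hC i) (hd j)) (abs_nonneg _)
      _ = (∑ i, |A i j|) * (C * d j) := by rw [Finset.sum_mul]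
      _ ≤ a * (C * d j) := mul_le_mul_of_nonneg_right (hcol j)
            (mul_nonneg hC0 (hd j))
      _ = a * C * d j := by ring
  calc ∑ j, ∑ i, |A i j| * (c i * d j) ≤ ∑ j, a * C * d j :=
        Finset.sum_le_sum fun j _ => step j
    _ = a * C * ∑ j, d j := by rw [Finset.mul_sum]

/-- AM-GM style quadratic bound: `∑∑ |A i j| xᵢ xⱼ ≤ a ∑ xᵢ²`. -/
lemma quad_le (A : Matrix (Fin n) (Fin n) ℝ) (a : ℝ) (x : Fin n → ℝ)
    (hrow : ∀ i, ∑ j, |A i j| ≤ a) (hcol : ∀ j, ∑ i, |A i j| ≤ a)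
    (hx : ∀ i, 0 ≤ x i) :
    ∑ i, ∑ j, |A i j| * (x i * x j) ≤ a * ∑ i, x i ^ 2 := by
  have T1 : ∑ i, ∑ j, |A i j| * x i ^ 2 / 2 ≤ a / 2 * ∑ i, x i ^ 2 := by
    rw [Finset.mul_sum]
    refine Finset.sum_le_sum fun i _ => ?_
    have : ∑ j, |A i j| * x i ^ 2 / 2 = (∑ j, |A i j|) * (x i ^ 2 / 2) := by
      rw [Finset.sum_mul]; exact Finset.sum_congr rfl fun j _ => by ring
    rw [this]
    calc (∑ j, |A i j|) * (x i ^ 2 / 2) ≤ a * (x i ^ 2 / 2) :=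
          mul_le_mul_of_nonneg_right (hrow i) (by positivity)
      _ = a / 2 * x i ^ 2 := by ring
  have T2 : ∑ i, ∑ j, |A i j| * x j ^ 2 / 2 ≤ a / 2 * ∑ i, x i ^ 2 := by
    rw [Finset.sum_comm, Finset.mul_sum]
    refine Finset.sum_le_sum fun j _ => ?_
    have : ∑ i, |A i j| * x j ^ 2 / 2 = (∑ i, |A i j|) * (x j ^ 2 / 2) := by
      rw [Finset.sum_mul]; exact Finset.sum_congr rfl fun i _ => by ring
    rw [this]
    calc (∑ i, |A i j|) * (x j ^ 2 / 2) ≤ a * (x j ^ 2 / 2) :=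
          mul_le_mul_of_nonneg_right (hcol j) (by positivity)
      _ = a / 2 * x j ^ 2 := by ring
  calc ∑ i, ∑ j, |A i j| * (x i * x j)
      ≤ ∑ i, ∑ j, (|A i j| * x i ^ 2 / 2 + |A i j| * x j ^ 2 / 2) := by
        refine Finset.sum_le_sum fun i _ => Finset.sum_le_sum fun j _ => ?_
        have h := abs_nonneg (A i j)
        nlinarith [sq_nonneg (x i - x j), hx i, hx j]
    _ = ∑ i, ∑ j, |A i j| * x i ^ 2 / 2 + ∑ i, ∑ j, |A i j| * x j ^ 2 / 2 := by
        rw [← Finset.sum_add_distrib]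
        exact Finset.sum_congr rfl fun i _ => by rw [← Finset.sum_add_distrib]
    _ ≤ a / 2 * ∑ i, x i ^ 2 + a / 2 * ∑ i, x i ^ 2 := add_le_add T1 T2
    _ = a * ∑ i, x i ^ 2 := by ring

end auxlemmas
section rowlemmas

lemma trig1 {x : ℝ} (h0 : 0 ≤ x) (h1 : x ≤ 1) :
    |Real.cos x - (1 - x ^ 2 / 2)| ≤ x ^ 4 * (5 / 96) := by
  have := Real.cos_bound (x := x) (by rwa [abs_of_nonneg h0])
  rwa [abs_of_nonneg h0] at this

lemma trig2 {x : ℝ} (h0 : 0 ≤ x) (h1 : x ≤ 1) : |Real.sin x - x| ≤ x ^ 3 / 4 := by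
  have h := Real.sin_bound (x := x) (by rwa [abs_of_nonneg h0])
  rw [abs_of_nonneg h0] at h
  obtain ⟨hl, hr⟩ := abs_le.mp h
  have hx4 : x ^ 4 ≤ x ^ 3 := by
    nlinarith [mul_nonneg (pow_nonneg h0 3) (sub_nonneg.mpr h1)]
  have hx3 : 0 ≤ x ^ 3 := pow_nonneg h0 3
  rw [abs_le]
  constructor <;> nlinarith

lemma trig3 {x : ℝ} (h0 : 0 ≤ x) (h1 : x ≤ 1) : |Real.cos x - 1| ≤ x ^ 2 := by
  have h := trig1 h0 h1
  obtain ⟨hl, hr⟩ := abs_le.mp h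
  have hx4 : x ^ 4 ≤ x ^ 2 := by
    nlinarith [mul_nonneg (mul_nonneg (pow_nonneg h0 2) h0) (sub_nonneg.mpr h1),
      mul_nonneg (pow_nonneg h0 2) (sub_nonneg.mpr h1)]
  have hx2 : 0 ≤ x ^ 2 := pow_nonneg h0 2
  rw [abs_le]
  constructor <;> nlinarith

lemma trig4 {x : ℝ} (h0 : 0 ≤ x) (h1 : x ≤ 1) : |Real.sin x| ≤ x := by
  have hpi : x ≤ Real.pi := le_trans h1 (by linarith [Real.pi_gt_three])
  rw [abs_of_nonneg (Real.sin_nonneg_of_nonneg_of_le_pi h0 hpi)]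
  exact Real.sin_le h0

variable {r : ℕ}

/-- Inner product of two combinations of an orthonormal-ish pair. -/
lemma inner_combo (σi ui : Pt r) (hσ : ‖σi‖ = 1) (hp : ⟪ui, σi⟫ = 0)
    (c1 s1 c2 s2 : ℝ) :
    ⟪c1 • σi + s1 • ui, c2 • σi + s2 • ui⟫ = c1 * c2 + s1 * s2 * ‖ui‖ ^ 2 := by
  have hp' : ⟪σi, ui⟫ = (0:ℝ) := by rw [real_inner_comm]; exact hp
  simp only [inner_add_left, inner_add_right, real_inner_smul_left,
    real_inner_smul_right, real_inner_self_eq_norm_sq, hσ, hp, hp']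
  ring

lemma norm_eq_of_sq_eq {v : Pt r} {c : ℝ} (h : ‖v‖ ^ 2 = c ^ 2) (hc : 0 ≤ c) :
    ‖v‖ = c := by
  nlinarith [norm_nonneg v]

lemma norm_combo_le (σi ui : Pt r) (hσ : ‖σi‖ = 1) (c s : ℝ) :
    ‖c • σi + s • ui‖ ≤ |c| + |s| * ‖ui‖ := by
  refine (norm_add_le _ _).trans ?_
  rw [norm_smul, norm_smul, hσ, Real.norm_eq_abs, Real.norm_eq_abs]
  simp

end rowlemmas
section geolemmas

lemma trig_cos {x : ℝ} (h0 : 0 ≤ x) (h1 : x ≤ 1) :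
    |Real.cos x - 1| ≤ x ^ 2 / 2 + x ^ 4 * (5 / 96) := by
  obtain ⟨hl, hr⟩ := abs_le.mp (trig1 h0 h1)
  rw [abs_le]; constructor <;> nlinarith

variable {r : ℕ}

lemma pow_facts {θ t : ℝ} (hθ0 : 0 ≤ θ) (hθ1 : θ ≤ 1) (ht0 : 0 ≤ t) (ht1 : t ≤ 1) :
    0 ≤ θ * t ∧ θ * t ≤ 1 :=
  ⟨mul_nonneg hθ0 ht0, mul_le_one₀ hθ1 ht0 ht1⟩

lemma row_st_norm (σi ui : Pt r) (hσ : ‖σi‖ = 1) (hp : ⟪ui, σi⟫ = 0) (t : ℝ) :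
    ‖Real.cos (‖ui‖ * t) • σi + (Real.sin (‖ui‖ * t) / ‖ui‖) • ui‖ = 1 := by
  rcases eq_or_ne ui 0 with h | h
  · simp [h, hσ]
  · have hθ : 0 < ‖ui‖ := norm_pos_iff.mpr h
    refine norm_eq_of_sq_eq ?_ zero_le_one
    rw [← real_inner_self_eq_norm_sq, inner_combo σi ui hσ hp]
    have := Real.sin_sq_add_cos_sq (‖ui‖ * t)
    field_simp
    nlinarith [this]

lemma row_d_st (σi ui : Pt r) (hσ : ‖σi‖ = 1) (hp : ⟪ui, σi⟫ = 0) (t : ℝ) :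
    ⟪(-(‖ui‖ * Real.sin (‖ui‖ * t))) • σi + Real.cos (‖ui‖ * t) • ui,
      Real.cos (‖ui‖ * t) • σi + (Real.sin (‖ui‖ * t) / ‖ui‖) • ui⟫ = 0 := by
  rcases eq_or_ne ui 0 with h | h
  · simp [h]
  · have hθ : 0 < ‖ui‖ := norm_pos_iff.mpr h
    rw [inner_combo σi ui hσ hp]
    field_simp
    ring

lemma row_d_norm (σi ui : Pt r) (hσ : ‖σi‖ = 1) (hp : ⟪ui, σi⟫ = 0) (t : ℝ) :
    ‖(-(‖ui‖ * Real.sin (‖ui‖ * t))) • σi + Real.cos (‖ui‖ * t) • ui‖ = ‖ui‖ := by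
  refine norm_eq_of_sq_eq ?_ (norm_nonneg ui)
  rw [← real_inner_self_eq_norm_sq, inner_combo σi ui hσ hp]
  nlinarith [Real.sin_sq_add_cos_sq (‖ui‖ * t)]

lemma row_w_norm (σi ui : Pt r) (hσ : ‖σi‖ = 1) (hθ1 : ‖ui‖ ≤ 1)
    {t : ℝ} (ht0 : 0 ≤ t) (ht1 : t ≤ 1) :
    ‖Real.cos (‖ui‖ * t) • σi + (Real.sin (‖ui‖ * t) / ‖ui‖) • ui - σi - t • ui‖
      ≤ ‖ui‖ ^ 2 * t ^ 2 := by
  rcases eq_or_ne ui 0 with h | h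
  · simp [h]
  · have hθ : 0 < ‖ui‖ := norm_pos_iff.mpr h
    set θ := ‖ui‖
    set x := θ * t with hx
    obtain ⟨hx0, hx1⟩ := pow_facts hθ.le hθ1 ht0 ht1
    have hvec : Real.cos x • σi + (Real.sin x / θ) • ui - σi - t • ui
        = (Real.cos x - 1) • σi + (Real.sin x / θ - t) • ui := by module
    rw [hvec]
    refine (norm_combo_le σi ui hσ _ _).trans ?_
    have h2 : |Real.sin x / θ - t| * θ = |Real.sin x - x| := by
      rw [show Real.sin x / θ - t = (Real.sin x - x) / θ by field_simp; rw [hx],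
        abs_div, abs_of_pos hθ, div_mul_cancel₀ _ hθ.ne']
    rw [h2]
    have hc := trig_cos hx0 hx1
    have hs := trig2 hx0 hx1
    have hx2 : x ^ 2 = θ ^ 2 * t ^ 2 := by rw [hx]; ring
    nlinarith [mul_nonneg (mul_nonneg (pow_nonneg hx0 2) hx0) (sub_nonneg.mpr hx1),
      mul_nonneg (pow_nonneg hx0 2) (sub_nonneg.mpr hx1),
      mul_nonneg (pow_nonneg hx0 3) (sub_nonneg.mpr hx1)]

lemma row_h_norm (σi ui : Pt r) (hσ : ‖σi‖ = 1) (hθ1 : ‖ui‖ ≤ 1)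
    {t : ℝ} (ht0 : 0 ≤ t) (ht1 : t ≤ 1) :
    ‖Real.cos (‖ui‖ * t) • σi + (Real.sin (‖ui‖ * t) / ‖ui‖) • ui - σi - t • ui
        + ((‖ui‖ ^ 2 * t ^ 2) / 2) • σi‖
      ≤ ‖ui‖ ^ 2 * t ^ 3 / 2 := by
  rcases eq_or_ne ui 0 with h | h
  · simp [h]
  · have hθ : 0 < ‖ui‖ := norm_pos_iff.mpr h
    set θ := ‖ui‖
    set x := θ * t with hx
    obtain ⟨hx0, hx1⟩ := pow_facts hθ.le hθ1 ht0 ht1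
    have hvec : Real.cos x • σi + (Real.sin x / θ) • ui - σi - t • ui
          + ((θ ^ 2 * t ^ 2) / 2) • σi
        = (Real.cos x - (1 - θ ^ 2 * t ^ 2 / 2)) • σi + (Real.sin x / θ - t) • ui := by
      module
    rw [hvec]
    refine (norm_combo_le σi ui hσ _ _).trans ?_
    have h2 : |Real.sin x / θ - t| * θ = |Real.sin x - x| := by
      rw [show Real.sin x / θ - t = (Real.sin x - x) / θ by field_simp; rw [hx],
        abs_div, abs_of_pos hθ, div_mul_cancel₀ _ hθ.ne']
    rw [h2]
    have hc : |Real.cos x - (1 - x ^ 2 / 2)| ≤ x ^ 4 * (5 / 96) := trig1 hx0 hx1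
    have hs := trig2 hx0 hx1
    have hx2 : x ^ 2 = θ ^ 2 * t ^ 2 := by rw [hx]; ring
    have hx3 : x ^ 3 = θ ^ 3 * t ^ 3 := by rw [hx]; ring
    have hθ3 : θ ^ 3 * t ^ 3 ≤ θ ^ 2 * t ^ 3 := by
      nlinarith [mul_nonneg (mul_nonneg (pow_nonneg hθ.le 2) ht0) (pow_nonneg ht0 2),
        mul_nonneg (pow_nonneg hθ.le 2) (pow_nonneg ht0 3)]
    have hx43 : x ^ 4 ≤ x ^ 3 := by
      nlinarith [mul_nonneg (pow_nonneg hx0 3) (sub_nonneg.mpr hx1)]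
    rw [← hx2]
    nlinarith [pow_nonneg hx0 3, pow_nonneg hx0 4]

lemma row_delta_norm (σi ui : Pt r) (hσ : ‖σi‖ = 1) (hθ1 : ‖ui‖ ≤ 1)
    {t : ℝ} (ht0 : 0 ≤ t) (ht1 : t ≤ 1) :
    ‖(-(‖ui‖ * Real.sin (‖ui‖ * t))) • σi + Real.cos (‖ui‖ * t) • ui - ui‖
      ≤ 2 * ‖ui‖ ^ 2 * t := by
  rcases eq_or_ne ui 0 with h | h
  · simp [h]
  · have hθ : 0 < ‖ui‖ := norm_pos_iff.mpr h
    set θ := ‖ui‖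
    set x := θ * t with hx
    obtain ⟨hx0, hx1⟩ := pow_facts hθ.le hθ1 ht0 ht1
    have hvec : (-(θ * Real.sin x)) • σi + Real.cos x • ui - ui
        = (-(θ * Real.sin x)) • σi + (Real.cos x - 1) • ui := by module
    rw [hvec]
    refine (norm_combo_le σi ui hσ _ _).trans ?_
    have h1 : |(-(θ * Real.sin x))| = θ * |Real.sin x| := by
      rw [abs_neg, abs_mul, abs_of_pos hθ]
    rw [h1]
    have hs := trig4 hx0 hx1
    have hc := trig3 hx0 hx1
    have h3 : θ * x = θ ^ 2 * t := by rw [hx]; ring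
    have h4 : x ^ 2 * θ ≤ θ ^ 2 * t := by
      have : x ^ 2 * θ = (θ ^ 2 * t) * (θ * t) := by rw [hx]; ring
      rw [this]
      nlinarith [mul_nonneg (pow_nonneg hθ.le 2) ht0]
    nlinarith [abs_nonneg (Real.sin x), mul_le_mul_of_nonneg_left hs hθ.le,
      mul_le_mul_of_nonneg_right hc hθ.le]

lemma row_delta_g (σi ui g : Pt r) (hσg : ⟪σi, g⟫ = ‖g‖) (hug : ⟪ui, g⟫ = 0)
    (hθ1 : ‖ui‖ ≤ 1) {t : ℝ} (ht0 : 0 ≤ t) (ht1 : t ≤ 1) :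
    |⟪(-(‖ui‖ * Real.sin (‖ui‖ * t))) • σi + Real.cos (‖ui‖ * t) • ui - ui, g⟫
        + t * ‖ui‖ ^ 2 * ‖g‖|
      ≤ ‖ui‖ ^ 2 * t ^ 3 / 4 * ‖g‖ := by
  set θ := ‖ui‖ with hθdef
  have hθ0 : 0 ≤ θ := norm_nonneg ui
  set x := θ * t with hx
  obtain ⟨hx0, hx1⟩ := pow_facts hθ0 hθ1 ht0 ht1
  have hinner : ⟪(-(θ * Real.sin x)) • σi + Real.cos x • ui - ui, g⟫
      = -(θ * Real.sin x) * ‖g‖ := by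
    rw [inner_sub_left, inner_add_left, real_inner_smul_left, real_inner_smul_left,
      hσg, hug]
    ring
  rw [hinner]
  have key : -(θ * Real.sin x) * ‖g‖ + t * θ ^ 2 * ‖g‖ = θ * (x - Real.sin x) * ‖g‖ := by
    rw [hx]; ring
  rw [key, abs_mul, abs_mul, abs_of_nonneg (norm_nonneg g), abs_of_nonneg hθ0]
  have hs := trig2 hx0 hx1
  rw [← hx] at hs
  have h1 : |x - Real.sin x| = |Real.sin x - x| := abs_sub_comm _ _
  rw [h1]
  have h2 : θ * |Real.sin x - x| ≤ θ ^ 2 * t ^ 3 / 4 := by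
    have : θ * (x ^ 3 / 4) ≤ θ ^ 2 * t ^ 3 / 4 := by
      have hxx : θ * (x ^ 3 / 4) = θ ^ 2 * t ^ 3 / 4 * (θ ^ 2) := by rw [hx]; ring
      rw [hxx]
      have hθsq : θ ^ 2 ≤ 1 := pow_le_one₀ hθ0 hθ1
      nlinarith [mul_nonneg (pow_nonneg hθ0 2) (pow_nonneg ht0 3)]
    nlinarith [mul_le_mul_of_nonneg_left hs hθ0]
  exact mul_le_mul_of_nonneg_right h2 (norm_nonneg g)

end geolemmas
section bformlemmas

variable {n r : ℕ}

/-- The pairing `B(p,q) = ∑ᵢ ⟪pᵢ, (Aq)ᵢ⟫`. -/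
def Bform (A : Matrix (Fin n) (Fin n) ℝ) (p q : Conf n r) : ℝ :=
  ∑ i, ⟪p i, gvec A q i⟫

lemma gvec_comb (A : Matrix (Fin n) (Fin n) ℝ) (p q w : Conf n r) (c : ℝ) (i : Fin n) :
    gvec A (fun k => p k + c • q k + w k) i
      = gvec A p i + c • gvec A q i + gvec A w i := by
  unfold gvec
  rw [Finset.smul_sum, ← Finset.sum_add_distrib, ← Finset.sum_add_distrib]
  refine Finset.sum_congr rfl fun j _ => ?_
  rw [smul_add, smul_add, smul_comm]

lemma Bform_comm (A : Matrix (Fin n) (Fin n) ℝ) (hA : A.IsSymm)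
    (hdiag : ∀ i, A i i = 0) (p q : Conf n r) :
    Bform A p q = Bform A q p :=
  sum_inner_gvec_symm A hA hdiag p q

lemma fval_eq_Bform (A : Matrix (Fin n) (Fin n) ℝ) (hdiag : ∀ i, A i i = 0)
    (σ : Conf n r) : fval A σ = Bform A σ σ :=
  (sum_inner_gvec A hdiag σ σ).symm

lemma Bform_expand (A : Matrix (Fin n) (Fin n) ℝ) (hA : A.IsSymm)
    (hdiag : ∀ i, A i i = 0) (p q w : Conf n r) (c : ℝ) :
    Bform A (fun i => p i + c • q i + w i) (fun i => p i + c • q i + w i)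
      = Bform A p p + 2 * c * Bform A q p + c ^ 2 * Bform A q q
        + 2 * Bform A w p + 2 * c * Bform A w q + Bform A w w := by
  have h9 : ∀ i : Fin n, ⟪p i + c • q i + w i,
        gvec A (fun k => p k + c • q k + w k) i⟫
      = ⟪p i, gvec A p i⟫ + c * ⟪p i, gvec A q i⟫ + ⟪p i, gvec A w i⟫
        + c * ⟪q i, gvec A p i⟫ + c * (c * ⟪q i, gvec A q i⟫) + c * ⟪q i, gvec A w i⟫
        + ⟪w i, gvec A p i⟫ + c * ⟪w i, gvec A q i⟫ + ⟪w i, gvec A w i⟫ := by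
    intro i
    rw [gvec_comb]
    simp only [inner_add_left, inner_add_right, real_inner_smul_left,
      real_inner_smul_right]
    ring
  have hsplit : Bform A (fun i => p i + c • q i + w i) (fun i => p i + c • q i + w i)
      = Bform A p p + c * Bform A p q + Bform A p w
        + c * Bform A q p + c * (c * Bform A q q) + c * Bform A q w
        + Bform A w p + c * Bform A w q + Bform A w w := by
    unfold Bform
    rw [Finset.sum_congr rfl fun i _ => h9 i]
    simp only [Finset.sum_add_distrib, ← Finset.mul_sum]
  rw [hsplit, Bform_comm A hA hdiag p q, Bform_comm A hA hdiag p w,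
    Bform_comm A hA hdiag q w]
  ring

lemma Bform_expand_left (A : Matrix (Fin n) (Fin n) ℝ)
    (u δ σb w : Conf n r) (t : ℝ) :
    Bform A (fun i => u i + δ i) (fun i => σb i + t • u i + w i)
      = Bform A u σb + t * Bform A u u + Bform A u w
        + Bform A δ σb + t * Bform A δ u + Bform A δ w := by
  have h6 : ∀ i : Fin n, ⟪u i + δ i, gvec A (fun k => σb k + t • u k + w k) i⟫
      = ⟪u i, gvec A σb i⟫ + t * ⟪u i, gvec A u i⟫ + ⟪u i, gvec A w i⟫
        + ⟪δ i, gvec A σb i⟫ + t * ⟪δ i, gvec A u i⟫ + ⟪δ i, gvec A w i⟫ := by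
    intro i
    rw [gvec_comb]
    simp only [inner_add_left, inner_add_right, real_inner_smul_right]
    ring
  unfold Bform
  rw [Finset.sum_congr rfl fun i _ => h6 i]
  simp only [Finset.sum_add_distrib, ← Finset.mul_sum]

end bformlemmas
section finalarith

lemma final_arith (n a μ t b E S grad gap : ℝ)
    (hn1 : 1 ≤ n) (ha0 : 0 ≤ a) (hμ : 0 < μ) (ht0 : 0 ≤ t) (ht1 : t ≤ 1)
    (hμ2b : μ ≤ 2 * b) (hba : b ≤ 2 * a) (hb0 : 0 < b)
    (hgapB : gap ≤ t ^ 2 * b + 4 * a * t ^ 3)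
    (hEb : |E| ≤ 6 * a * t ^ 2)
    (hS : S = -t * b + E)
    (hgrad : 2 * S ^ 2 ≤ grad) :
    μ / n * gap - t ^ 3 * a * (3 * μ + 88 * n * a) ≤ grad := by
  have ht20 : (0:ℝ) ≤ t ^ 2 := sq_nonneg t
  have ht30 : (0:ℝ) ≤ t ^ 3 := by positivity
  have hμ4a : μ ≤ 4 * a := by linarith
  obtain ⟨hE1, hE2⟩ := abs_le.mp hEb
  have hgradLB : 2 * t ^ 2 * b ^ 2 - 48 * a ^ 2 * t ^ 3 ≤ grad := by
    refine le_trans ?_ hgrad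
    rw [hS]
    nlinarith [sq_nonneg E, mul_nonneg (mul_nonneg ht0 hb0.le) (sub_nonneg.mpr hE2),
      mul_nonneg (mul_nonneg ha0 ht30) (sub_nonneg.mpr hba)]
  have hnpos : (0:ℝ) < n := by linarith
  have hL : μ / n * gap ≤ 2 * t ^ 2 * b ^ 2 + 4 * μ * a * t ^ 3 := by
    have hpos : 0 < μ / n := div_pos hμ hnpos
    have h1 : μ / n * gap ≤ μ / n * (t ^ 2 * b + 4 * a * t ^ 3) :=
      mul_le_mul_of_nonneg_left hgapB hpos.le
    have hμn : μ / n ≤ μ := by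
      rw [div_le_iff₀ hnpos]
      nlinarith
    have h2 : μ / n * (t ^ 2 * b) ≤ μ * (t ^ 2 * b) :=
      mul_le_mul_of_nonneg_right hμn (mul_nonneg ht20 hb0.le)
    have h3 : μ * (t ^ 2 * b) ≤ (2 * b) * (t ^ 2 * b) :=
      mul_le_mul_of_nonneg_right hμ2b (mul_nonneg ht20 hb0.le)
    have h4 : μ / n * (4 * a * t ^ 3) ≤ μ * (4 * a * t ^ 3) :=
      mul_le_mul_of_nonneg_right hμn (by positivity)
    have h5 : μ / n * (t ^ 2 * b + 4 * a * t ^ 3)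
        = μ / n * (t ^ 2 * b) + μ / n * (4 * a * t ^ 3) := by ring
    nlinarith
  have hfinal : 4 * μ * a * t ^ 3 + 48 * a ^ 2 * t ^ 3
      ≤ t ^ 3 * a * (3 * μ + 88 * n * a) := by
    nlinarith [mul_nonneg (mul_nonneg ht30 ha0) (sub_nonneg.mpr hμ4a),
      mul_nonneg (mul_nonneg ht30 (mul_nonneg ha0 ha0)) (sub_nonneg.mpr hn1)]
  linarith

end finalarith
/-- near a stationary point with quadratic decay, the squared
gradient norm dominates the optimality gap up to a cubic error. -/
theorem gradient_dominates_gap {n r : ℕ} (hn : 0 < n) (hr : 0 < r)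
    (A : Matrix (Fin n) (Fin n) ℝ) (hA : A.IsSymm) (hdiag : ∀ i, A i i = 0)
    (σb : Conf n r) (hσb : inM σb) (hstat : stationary A σb)
    (μ : ℝ) (hμ : 0 < μ) (hqd : quadDecay A σb μ)
    (u : Conf n r) (hu : tangent σb u) (hun : fnormSq u = 1) (hperp : perpV σb u)
    (t : ℝ) (ht0 : 0 ≤ t) (ht1 : t ≤ 1) :
    μ / n * (fval A σb - fval A (geo σb u t))
      - t ^ 3 * Anorm1 A * (3 * μ + 88 * n * Anorm1 A)
      ≤ gradNormSq A (geo σb u t) := by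
  classical
  have hn1 : (1:ℝ) ≤ (n:ℝ) := by exact_mod_cast hn
  have ha0 : 0 ≤ Anorm1 A := Anorm1_nonneg hn A
  set a := Anorm1 A with hadef
  have hrow : ∀ i, ∑ j, |A i j| ≤ a := row_le_Anorm1 hn A hA
  have hcol : ∀ j, ∑ i, |A i j| ≤ a := col_le_Anorm1 hn A
  have hθsum : ∑ i, ‖u i‖ ^ 2 = 1 := hun
  have ht20 : (0:ℝ) ≤ t ^ 2 := sq_nonneg t
  have ht30 : (0:ℝ) ≤ t ^ 3 := by positivity
  have ht32 : t ^ 3 ≤ t ^ 2 := by nlinarith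
  have ht43 : t ^ 4 ≤ t ^ 3 := by nlinarith
  have hθsq1 : ∀ i, ‖u i‖ ^ 2 ≤ 1 := by
    intro i
    have h2 : ‖u i‖ ^ 2 ≤ ∑ j, ‖u j‖ ^ 2 :=
      Finset.single_le_sum (f := fun j => ‖u j‖ ^ 2) (fun j _ => sq_nonneg _)
        (Finset.mem_univ i)
    rw [hθsum] at h2
    exact h2
  have hθ1 : ∀ i, ‖u i‖ ≤ 1 := by
    intro i
    nlinarith [norm_nonneg (u i), hθsq1 i]
  have hsum_theta : ∀ C : ℝ, ∑ i, ‖u i‖ ^ 2 * C = C := by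
    intro C; rw [← Finset.sum_mul, hθsum, one_mul]
  -- stationarity facts
  have hgvec : ∀ i, gvec A σb i = ‖gvec A σb i‖ • σb i := by
    intro i
    obtain ⟨hne, heq⟩ := hstat i
    conv_rhs => rw [heq]
    rw [smul_smul, mul_inv_cancel₀ (norm_ne_zero_iff.mpr hne), one_smul]
  have hσg : ∀ i, ⟪σb i, gvec A σb i⟫ = ‖gvec A σb i‖ := by
    intro i
    conv_lhs => rw [hgvec i]
    rw [real_inner_smul_right, real_inner_self_eq_norm_sq, hσb i]
    ring
  have hug : ∀ i, ⟪u i, gvec A σb i⟫ = 0 := by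
    intro i
    conv_lhs => rw [hgvec i]
    rw [real_inner_smul_right, hu i, mul_zero]
  have hgle : ∀ i, ‖gvec A σb i‖ ≤ a := by
    intro i
    refine (gvec_norm_le A hdiag σb i).trans ?_
    refine le_trans (le_of_eq ?_) (hrow i)
    exact Finset.sum_congr rfl fun j _ => by rw [hσb j, mul_one]
  have hvle : ∀ i, ‖gvec A u i‖ ≤ a := by
    intro i
    refine (gvec_norm_le A hdiag u i).trans ?_
    refine le_trans (Finset.sum_le_sum fun j _ => ?_) (hrow i)
    calc |A i j| * ‖u j‖ ≤ |A i j| * 1 :=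
          mul_le_mul_of_nonneg_left (hθ1 j) (abs_nonneg _)
      _ = |A i j| := mul_one _
  -- geodesic row objects
  set w : Conf n r := fun i => geo σb u t i - σb i - t • u i with hwdef
  set d : Conf n r := fun i =>
    (-(‖u i‖ * Real.sin (‖u i‖ * t))) • σb i + Real.cos (‖u i‖ * t) • u i with hddef
  set δ : Conf n r := fun i => d i - u i with hδdef
  have hdecomp : ∀ i, geo σb u t i = σb i + t • u i + w i := by
    intro i
    simp only [hwdef]
    abel
  have hfun : geo σb u t = fun i => σb i + t • u i + w i := funext hdecomp
  have hdfun : d = fun i => u i + δ i := by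
    funext i
    simp only [hδdef]
    abel
  have hst1 : ∀ i, ‖geo σb u t i‖ = 1 :=
    fun i => row_st_norm (σb i) (u i) (hσb i) (hu i) t
  have hdst : ∀ i, ⟪d i, geo σb u t i⟫ = 0 :=
    fun i => row_d_st (σb i) (u i) (hσb i) (hu i) t
  have hdnorm : ∀ i, ‖d i‖ = ‖u i‖ :=
    fun i => row_d_norm (σb i) (u i) (hσb i) (hu i) t
  have hwle : ∀ i, ‖w i‖ ≤ ‖u i‖ ^ 2 * t ^ 2 :=
    fun i => row_w_norm (σb i) (u i) (hσb i) (hθ1 i) ht0 ht1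
  have hhle : ∀ i, ‖w i + ((‖u i‖ ^ 2 * t ^ 2) / 2) • σb i‖ ≤ ‖u i‖ ^ 2 * t ^ 3 / 2 :=
    fun i => row_h_norm (σb i) (u i) (hσb i) (hθ1 i) ht0 ht1
  have hδle : ∀ i, ‖δ i‖ ≤ 2 * ‖u i‖ ^ 2 * t :=
    fun i => row_delta_norm (σb i) (u i) (hσb i) (hθ1 i) ht0 ht1
  have hδg : ∀ i, |⟪δ i, gvec A σb i⟫ + t * ‖u i‖ ^ 2 * ‖gvec A σb i‖|
      ≤ ‖u i‖ ^ 2 * t ^ 3 / 4 * ‖gvec A σb i‖ :=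
    fun i => row_delta_g (σb i) (u i) (gvec A σb i) (hσg i) (hug i) (hθ1 i) ht0 ht1
  clear_value w d δ
  -- scalar sums
  set Suv := ∑ i, ⟪u i, gvec A u i⟫ with hSuvdef
  set Sg := ∑ i, ‖u i‖ ^ 2 * ‖gvec A σb i‖ with hSgdef
  set b := Sg - Suv with hbdef
  set Sh := ∑ i, ⟪w i + ((‖u i‖ ^ 2 * t ^ 2) / 2) • σb i, gvec A σb i⟫ with hShdef
  set e1 := ∑ i, (⟪δ i, gvec A σb i⟫ + t * ‖u i‖ ^ 2 * ‖gvec A σb i‖) with he1def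
  set E := e1 + t * Bform A δ u + Bform A u w + Bform A δ w with hEdef
  clear_value Suv Sg b Sh e1 E
  have hBuu : Bform A u u = Suv := by rw [hSuvdef]; rfl
  -- Hessian facts
  have hHform : Hform A σb u = 2 * (Suv - Sg) := by
    have hpt : ∀ i : Fin n, ⟪u i, gvec A u i⟫ - ‖u i‖ ^ 2 * ⟪σb i, gvec A σb i⟫
        = ⟪u i, gvec A u i⟫ - ‖u i‖ ^ 2 * ‖gvec A σb i‖ := fun i => by rw [hσg i]
    unfold Hform
    rw [hSuvdef, hSgdef, Finset.sum_congr rfl fun i _ => hpt i,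
      Finset.sum_sub_distrib]
  have hHμ : Hform A σb u ≤ -μ := by
    have h := hqd u hu hperp
    rw [hun, mul_one] at h
    exact h
  have hμ2b : μ ≤ 2 * b := by rw [hbdef]; linarith [hHform ▸ hHμ]
  have hb0 : 0 < b := by linarith
  -- sum bounds
  have hSga : Sg ≤ a := by
    rw [hSgdef]
    refine le_trans (Finset.sum_le_sum fun i _ =>
      mul_le_mul_of_nonneg_left (hgle i) (sq_nonneg _)) ?_
    rw [hsum_theta]
  have hSuvb : |Suv| ≤ a := by
    rw [hSuvdef]
    refine le_trans (abs_sum_inner_le u u A hdiag (fun i => ‖u i‖) (fun i => ‖u i‖)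
      (fun i => le_refl _) (fun i => le_refl _)) ?_
    refine le_trans (quad_le A a _ hrow hcol fun i => norm_nonneg _) ?_
    rw [hθsum, mul_one]
  have hba : b ≤ 2 * a := by
    obtain ⟨h1, h2⟩ := abs_le.mp hSuvb
    rw [hbdef]; linarith
  have hμ4a : μ ≤ 4 * a := by linarith
  -- Bform bounds
  have hBwu : |Bform A w u| ≤ a * t ^ 2 := by
    refine le_trans (abs_sum_inner_le w u A hdiag (fun i => ‖u i‖ ^ 2 * t ^ 2)
      (fun i => ‖u i‖) hwle (fun i => le_refl _)) ?_
    refine le_trans (dsum_le_left A a 1 _ _ hrow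
      (fun i => mul_nonneg (sq_nonneg _) ht20) (fun j => norm_nonneg _)
      hθ1 zero_le_one) ?_
    rw [hsum_theta, mul_one]
  have hBww : |Bform A w w| ≤ a * t ^ 4 := by
    refine le_trans (abs_sum_inner_le w w A hdiag (fun i => ‖u i‖ ^ 2 * t ^ 2)
      (fun i => ‖u i‖ ^ 2 * t ^ 2) hwle hwle) ?_
    refine le_trans (dsum_le_left A a (t ^ 2) _ _ hrow
      (fun i => mul_nonneg (sq_nonneg _) ht20) (fun j => mul_nonneg (sq_nonneg _) ht20)
      (fun j => by
        calc ‖u j‖ ^ 2 * t ^ 2 ≤ 1 * t ^ 2 :=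
              mul_le_mul_of_nonneg_right (hθsq1 j) ht20
          _ = t ^ 2 := one_mul _) ht20) ?_
    rw [hsum_theta]
    exact le_of_eq (by ring)
  have hBuw : |Bform A u w| ≤ a * t ^ 2 := by
    refine le_trans (abs_sum_inner_le u w A hdiag (fun i => ‖u i‖)
      (fun i => ‖u i‖ ^ 2 * t ^ 2) (fun i => le_refl _) hwle) ?_
    refine le_trans (dsum_le_right A a 1 _ _ hcol (fun i => norm_nonneg _)
      (fun j => mul_nonneg (sq_nonneg _) ht20) hθ1 zero_le_one) ?_
    rw [hsum_theta, mul_one]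
  have hBδu : |Bform A δ u| ≤ 2 * a * t := by
    refine le_trans (Finset.abs_sum_le_sum_abs _ _) ?_
    have hpt : ∀ i, |⟪δ i, gvec A u i⟫| ≤ ‖u i‖ ^ 2 * (2 * a * t) := by
      intro i
      refine le_trans (abs_real_inner_le_norm _ _) ?_
      calc ‖δ i‖ * ‖gvec A u i‖ ≤ (2 * ‖u i‖ ^ 2 * t) * a := by
            refine mul_le_mul (hδle i) (hvle i) (norm_nonneg _) ?_
            positivity
        _ = ‖u i‖ ^ 2 * (2 * a * t) := by ring
    refine le_trans (Finset.sum_le_sum fun i _ => hpt i) ?_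
    rw [hsum_theta]
  have hBδw : |Bform A δ w| ≤ 2 * a * t ^ 3 := by
    refine le_trans (abs_sum_inner_le δ w A hdiag (fun i => 2 * ‖u i‖ ^ 2 * t)
      (fun i => ‖u i‖ ^ 2 * t ^ 2) hδle hwle) ?_
    have key := dsum_le_left A a (t ^ 2) (fun i => 2 * ‖u i‖ ^ 2 * t)
      (fun i => ‖u i‖ ^ 2 * t ^ 2) hrow
      (fun i => by positivity) (fun j => mul_nonneg (sq_nonneg _) ht20)
      (fun j => by
        calc ‖u j‖ ^ 2 * t ^ 2 ≤ 1 * t ^ 2 :=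
              mul_le_mul_of_nonneg_right (hθsq1 j) ht20
          _ = t ^ 2 := one_mul _) ht20
    refine key.trans ?_
    have : ∑ i, 2 * ‖u i‖ ^ 2 * t = 2 * t := by
      rw [Finset.sum_congr rfl fun i (_ : i ∈ Finset.univ) =>
        (by ring : 2 * ‖u i‖ ^ 2 * t = ‖u i‖ ^ 2 * (2 * t)), hsum_theta]
    rw [this]
    exact le_of_eq (by ring)
  have hBuσ : Bform A u σb = 0 := Finset.sum_eq_zero fun i _ => hug i
  have hBδσ : Bform A δ σb = e1 - t * Sg := by
    unfold Bform
    rw [he1def, hSgdef, Finset.mul_sum, ← Finset.sum_sub_distrib]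
    exact Finset.sum_congr rfl fun i _ => by ring
  have hBwσ : Bform A w σb = Sh - t ^ 2 / 2 * Sg := by
    unfold Bform
    rw [hShdef, hSgdef, Finset.mul_sum, ← Finset.sum_sub_distrib]
    refine Finset.sum_congr rfl fun i _ => ?_
    rw [inner_add_left, real_inner_smul_left, hσg i]
    ring
  have he1b : |e1| ≤ a * t ^ 3 / 4 := by
    rw [he1def]
    refine le_trans (Finset.abs_sum_le_sum_abs _ _) ?_
    have hpt : ∀ i, |⟪δ i, gvec A σb i⟫ + t * ‖u i‖ ^ 2 * ‖gvec A σb i‖|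
        ≤ ‖u i‖ ^ 2 * (a * t ^ 3 / 4) := by
      intro i
      refine (hδg i).trans ?_
      calc ‖u i‖ ^ 2 * t ^ 3 / 4 * ‖gvec A σb i‖
          ≤ ‖u i‖ ^ 2 * t ^ 3 / 4 * a := by
            refine mul_le_mul_of_nonneg_left (hgle i) ?_
            positivity
        _ = ‖u i‖ ^ 2 * (a * t ^ 3 / 4) := by ring
    refine le_trans (Finset.sum_le_sum fun i _ => hpt i) ?_
    rw [hsum_theta]
  have hShb : |Sh| ≤ a * t ^ 3 / 2 := by
    rw [hShdef]
    refine le_trans (Finset.abs_sum_le_sum_abs _ _) ?_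
    have hpt : ∀ i, |⟪w i + ((‖u i‖ ^ 2 * t ^ 2) / 2) • σb i, gvec A σb i⟫|
        ≤ ‖u i‖ ^ 2 * (a * t ^ 3 / 2) := by
      intro i
      refine le_trans (abs_real_inner_le_norm _ _) ?_
      calc ‖w i + ((‖u i‖ ^ 2 * t ^ 2) / 2) • σb i‖ * ‖gvec A σb i‖
          ≤ (‖u i‖ ^ 2 * t ^ 3 / 2) * a := by
            refine mul_le_mul (hhle i) (hgle i) (norm_nonneg _) ?_
            positivity
        _ = ‖u i‖ ^ 2 * (a * t ^ 3 / 2) := by ring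
    refine le_trans (Finset.sum_le_sum fun i _ => hpt i) ?_
    rw [hsum_theta]
  -- gap formula
  have hgap : fval A σb - fval A (geo σb u t)
      = t ^ 2 * b - 2 * Sh - 2 * t * Bform A w u - Bform A w w := by
    rw [fval_eq_Bform A hdiag (geo σb u t), hfun, Bform_expand A hA hdiag σb u w t,
      ← fval_eq_Bform A hdiag σb, hBuσ, hBwσ, hBuu, hbdef]
    ring
  have hgapB : fval A σb - fval A (geo σb u t) ≤ t ^ 2 * b + 4 * a * t ^ 3 := by
    rw [hgap]
    obtain ⟨h1, h2⟩ := abs_le.mp hShb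
    obtain ⟨h3, h4⟩ := abs_le.mp hBwu
    obtain ⟨h5, h6⟩ := abs_le.mp hBww
    have h7 : t * (-(Bform A w u)) ≤ t * (a * t ^ 2) :=
      mul_le_mul_of_nonneg_left (by linarith) ht0
    have h8 : a * t ^ 4 ≤ a * t ^ 3 := mul_le_mul_of_nonneg_left ht43 ha0
    linarith
  -- gradient pairing formula
  have hSformula : (∑ i, ⟪d i, gvec A (geo σb u t) i⟫) = -t * b + E := by
    have hSB : (∑ i, ⟪d i, gvec A (geo σb u t) i⟫) = Bform A d (geo σb u t) := rfl
    rw [hSB, hdfun, hfun, Bform_expand_left A u δ σb w t, hBuσ, hBδσ, hBuu,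
      hEdef, hbdef]
    ring
  have hEb : |E| ≤ 6 * a * t ^ 2 := by
    have c1 : |E| ≤ |e1| + t * |Bform A δ u| + |Bform A u w| + |Bform A δ w| := by
      rw [hEdef]
      have s1 : |e1 + t * Bform A δ u + Bform A u w + Bform A δ w|
          ≤ |e1 + t * Bform A δ u + Bform A u w| + |Bform A δ w| := abs_add_le _ _
      have s2 : |e1 + t * Bform A δ u + Bform A u w|
          ≤ |e1 + t * Bform A δ u| + |Bform A u w| := abs_add_le _ _
      have s3 : |e1 + t * Bform A δ u| ≤ |e1| + |t * Bform A δ u| := abs_add_le _ _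
      rw [abs_mul, abs_of_nonneg ht0] at s3
      linarith
    have c2 : t * |Bform A δ u| ≤ t * (2 * a * t) :=
      mul_le_mul_of_nonneg_left hBδu ht0
    have h9 : a * t ^ 3 ≤ a * t ^ 2 := mul_le_mul_of_nonneg_left ht32 ha0
    have h10 : (0:ℝ) ≤ a * t ^ 2 := mul_nonneg ha0 ht20
    linarith [he1b, hBuw, hBδw]
  -- Cauchy–Schwarz lower bound for the gradient
  set P : Fin n → ℝ := fun i => ‖gvec A (geo σb u t) i‖ ^ 2
    - ⟪geo σb u t i, gvec A (geo σb u t) i⟫ ^ 2 with hPdef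
  clear_value P
  have hPsq : ∀ i, P i = ‖gvec A (geo σb u t) i
      - ⟪geo σb u t i, gvec A (geo σb u t) i⟫ • geo σb u t i‖ ^ 2 := by
    intro i
    rw [hPdef]
    rw [norm_sub_sq_real, norm_smul, real_inner_smul_right,
      real_inner_comm (gvec A (geo σb u t) i) (geo σb u t i), hst1 i]
    rw [Real.norm_eq_abs, mul_one, sq_abs,
      real_inner_comm (geo σb u t i) (gvec A (geo σb u t) i)]
    ring
  have hP0 : ∀ i, 0 ≤ P i := fun i => (hPsq i) ▸ sq_nonneg _
  have hkey : ∀ i, ⟪d i, gvec A (geo σb u t) i⟫ ^ 2 ≤ ‖u i‖ ^ 2 * P i := by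
    intro i
    have h1 : ⟪d i, gvec A (geo σb u t) i⟫
        = ⟪d i, gvec A (geo σb u t) i
            - ⟪geo σb u t i, gvec A (geo σb u t) i⟫ • geo σb u t i⟫ := by
      rw [inner_sub_right, real_inner_smul_right, hdst i, mul_zero, sub_zero]
    rw [h1]
    have h2 := abs_real_inner_le_norm (d i) (gvec A (geo σb u t) i
      - ⟪geo σb u t i, gvec A (geo σb u t) i⟫ • geo σb u t i)
    calc ⟪d i, _⟫ ^ 2 = |⟪d i, gvec A (geo σb u t) i
            - ⟪geo σb u t i, gvec A (geo σb u t) i⟫ • geo σb u t i⟫| ^ 2 :=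
          (sq_abs _).symm
      _ ≤ (‖d i‖ * ‖gvec A (geo σb u t) i
            - ⟪geo σb u t i, gvec A (geo σb u t) i⟫ • geo σb u t i‖) ^ 2 :=
          pow_le_pow_left₀ (abs_nonneg _) h2 2
      _ = ‖u i‖ ^ 2 * P i := by rw [mul_pow, hdnorm i, ← hPsq i]
  have habs2 : ∀ i, |⟪d i, gvec A (geo σb u t) i⟫| ≤ ‖u i‖ * Real.sqrt (P i) := by
    intro i
    rw [← Real.sqrt_sq_eq_abs]
    rw [show ‖u i‖ * Real.sqrt (P i) = Real.sqrt (‖u i‖ ^ 2 * P i) by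
      rw [Real.sqrt_mul (sq_nonneg _), Real.sqrt_sq (norm_nonneg _)]]
    exact Real.sqrt_le_sqrt (hkey i)
  have hS2 : (∑ i, ⟪d i, gvec A (geo σb u t) i⟫) ^ 2 ≤ ∑ i, P i := by
    have hsum1 : |∑ i, ⟪d i, gvec A (geo σb u t) i⟫|
        ≤ ∑ i, ‖u i‖ * Real.sqrt (P i) :=
      (Finset.abs_sum_le_sum_abs _ _).trans (Finset.sum_le_sum fun i _ => habs2 i)
    have hcs : (∑ i, ‖u i‖ * Real.sqrt (P i)) ^ 2 ≤ ∑ i, P i := by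
      refine le_trans (Finset.sum_mul_sq_le_sq_mul_sq Finset.univ _ _) ?_
      have hsq : ∑ i, Real.sqrt (P i) ^ 2 = ∑ i, P i :=
        Finset.sum_congr rfl fun i _ => Real.sq_sqrt (hP0 i)
      rw [hsq, hθsum, one_mul]
    calc (∑ i, ⟪d i, gvec A (geo σb u t) i⟫) ^ 2
        = |∑ i, ⟪d i, gvec A (geo σb u t) i⟫| ^ 2 := (sq_abs _).symm
      _ ≤ (∑ i, ‖u i‖ * Real.sqrt (P i)) ^ 2 := pow_le_pow_left₀ (abs_nonneg _) hsum1 2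
      _ ≤ ∑ i, P i := hcs
  have hgradP : gradNormSq A (geo σb u t) = 2 * ∑ i, P i := by
    unfold gradNormSq
    rw [hPdef]
  have hgrad : 2 * (∑ i, ⟪d i, gvec A (geo σb u t) i⟫) ^ 2
      ≤ gradNormSq A (geo σb u t) := by
    rw [hgradP]
    linarith [hS2]
  exact final_arith (n:ℝ) a μ t b E (∑ i, ⟪d i, gvec A (geo σb u t) i⟫)
    (gradNormSq A (geo σb u t)) (fval A σb - fval A (geo σb u t))
    hn1 ha0 hμ ht0 ht1 hμ2b hba hb0 hgapB hEb hSformula hgrad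
end
end

section
/- (Kernel of the dual slack quadratic form on the tangent space.) Let σ ∈ M_r and let Λ be an n×n real diagonal matrix such that Λ − A is positive semidefinite and (Λ − A)σ = 0. Let r* = rank(σ). Assume strict complementarity: the kernel of Λ − A equals the column space of σ (equivalently, rank(Λ − A) = n − r*). Assume dual nondegeneracy: there exists Q₁ ∈ ℝ^{n×r*} with orthonormal columns whose column space equals the column space of σ such that, writing q_1,…,q_n ∈ ℝ^{r*} for the rows of Q₁, the matrices q_1 q_1ᵀ, …, q_n q_nᵀ span the space of r*×r* real symmetric matrices. Then for every u ∈ T_σ M_r: ⟨u, (Λ − A)u⟩_F = 0 if and only if u ∈ V_σ. -/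
open scoped BigOperators
open Finset Matrix

noncomputable section

/-- Over ℝ, `trace (Xᵀ * X) = 0` forces `X = 0`. -/
lemma aux_trace_sq {m k : ℕ} (X : Matrix (Fin m) (Fin k) ℝ)
    (h : Matrix.trace (Xᵀ * X) = 0) : X = 0 := by
  have htr : ∑ j, ∑ i, X i j ^ 2 = 0 := by
    rw [← h]
    simp [Matrix.trace, Matrix.mul_apply, Matrix.diag, sq]
  have h2 := (Finset.sum_eq_zero_iff_of_nonneg
    (fun j _ => Finset.sum_nonneg fun i _ => sq_nonneg (X i j))).mp htr
  ext i j
  have h3 := (Finset.sum_eq_zero_iff_of_nonneg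
    (fun i _ => sq_nonneg (X i j))).mp (h2 j (Finset.mem_univ j)) i (Finset.mem_univ i)
  simpa using pow_eq_zero_iff (n := 2) (by norm_num) |>.mp h3

/-- Projection onto the column space of a matrix with orthonormal columns fixes matrices
whose columns lie in that column space. -/
lemma aux_proj_fix {n s m : ℕ} (Q : Matrix (Fin n) (Fin s) ℝ) (hQ : Qᵀ * Q = 1)
    (X : Matrix (Fin n) (Fin m) ℝ)
    (h : ∀ k, ∃ z, Q.mulVec z = fun i => X i k) : Q * Qᵀ * X = X := by
  ext i k
  obtain ⟨z, hz⟩ := h k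
  have h1 : (Q * Qᵀ * X) i k = ((Q * Qᵀ).mulVec (fun i => X i k)) i := by
    simp [Matrix.mul_apply, Matrix.mulVec, dotProduct, Finset.mul_sum, Finset.sum_mul]
  rw [h1, ← hz, Matrix.mulVec_mulVec, Matrix.mul_assoc, hQ, Matrix.mul_one, hz]


/-- kernel of the dual slack quadratic form on the tangent space.
Under strict complementarity and dual nondegeneracy, for tangent `u` one has
`⟨u, (Λ − A)u⟩_F = 0` iff `u ∈ V_σ = {σB : Bᵀ = −B}`. -/
theorem dual_slack_kernel {n r : ℕ} (hn : 0 < n) (hr : 0 < r)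
    (A : Matrix (Fin n) (Fin n) ℝ) (hA : A.IsSymm) (hdiag : ∀ i, A i i = 0)
    (σ : Matrix (Fin n) (Fin r) ℝ) (hσ : ∀ i, ∑ k, σ i k ^ 2 = 1)
    (Λ : Matrix (Fin n) (Fin n) ℝ) (hΛ : Λ.IsDiag)
    (hpsd : (Λ - A).PosSemidef) (hzero : (Λ - A) * σ = 0)
    (hsc : LinearMap.ker (Λ - A).mulVecLin = LinearMap.range σ.mulVecLin)
    (Q₁ : Matrix (Fin n) (Fin σ.rank) ℝ) (hQ : Q₁ᵀ * Q₁ = 1)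
    (hQcol : LinearMap.range Q₁.mulVecLin = LinearMap.range σ.mulVecLin)
    (hspan : ∀ X : Matrix (Fin σ.rank) (Fin σ.rank) ℝ, X.IsSymm →
      X ∈ Submodule.span ℝ (Set.range fun i : Fin n => vecMulVec (Q₁ i) (Q₁ i)))
    (u : Matrix (Fin n) (Fin r) ℝ) (hu : ∀ i, ∑ k, u i k * σ i k = 0) :
    Matrix.trace (uᵀ * (Λ - A) * u) = 0 ↔
      ∃ B : Matrix (Fin r) (Fin r) ℝ, Bᵀ = -B ∧ u = σ * B := by
  constructor
  · intro h
    -- Step 1: (Λ - A) * u = 0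
    obtain ⟨P, hP⟩ : ∃ P : Matrix (Fin n) (Fin n) ℝ, Λ - A = Pᴴ * P := by
      open scoped MatrixOrder in exact CStarAlgebra.nonneg_iff_eq_star_mul_self.mp hpsd.nonneg
    have hPH : Pᴴ = Pᵀ := by ext i j; simp [Matrix.conjTranspose_apply]
    have hPu : P * u = 0 := by
      apply aux_trace_sq
      rw [Matrix.transpose_mul, ← hPH, Matrix.mul_assoc, ← Matrix.mul_assoc Pᴴ P u, ← hP,
        ← Matrix.mul_assoc]
      exact h
    have hSu : (Λ - A) * u = 0 := by
      rw [hP, Matrix.mul_assoc, hPu, Matrix.mul_zero]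
    -- Step 2: columns of u (and σ) lie in the column space of Q₁
    have hcolu : ∀ k, ∃ z, Q₁.mulVec z = fun i => u i k := by
      intro k
      have hker : (fun i => u i k) ∈ LinearMap.ker (Λ - A).mulVecLin := by
        rw [LinearMap.mem_ker]
        ext i
        have := congrFun (congrFun hSu i) k
        simpa [Matrix.mulVecLin_apply, Matrix.mulVec, dotProduct, Matrix.mul_apply, sub_mul,
          Finset.sum_sub_distrib] using this
      rw [hsc, ← hQcol] at hker
      obtain ⟨z, hz⟩ := hker
      exact ⟨z, hz⟩
    have hcolσ : ∀ k, ∃ z, Q₁.mulVec z = fun i => σ i k := by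
      intro k
      have hmem : (fun i => σ i k) ∈ LinearMap.range σ.mulVecLin :=
        ⟨Pi.single k 1, by ext i; simp [Matrix.mulVecLin_apply]⟩
      rw [← hQcol] at hmem
      obtain ⟨z, hz⟩ := hmem
      exact ⟨z, hz⟩
    set R : Matrix (Fin σ.rank) (Fin r) ℝ := Q₁ᵀ * σ with hR
    set W : Matrix (Fin σ.rank) (Fin r) ℝ := Q₁ᵀ * u with hW
    clear_value R W
    have hQRσ : Q₁ * R = σ := by
      rw [hR, ← Matrix.mul_assoc]; exact aux_proj_fix Q₁ hQ σ hcolσ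
    have hQWu : Q₁ * W = u := by
      rw [hW, ← Matrix.mul_assoc]; exact aux_proj_fix Q₁ hQ u hcolu
    -- Step 3: M := W Rᵀ + R Wᵀ vanishes
    set M : Matrix (Fin σ.rank) (Fin σ.rank) ℝ := W * Rᵀ + R * Wᵀ with hM
    clear_value M
    have hMsymm : M.IsSymm := by
      rw [Matrix.IsSymm, hM]
      simp only [Matrix.transpose_add, Matrix.transpose_mul, Matrix.transpose_transpose]
      abel
    have hQMQ : Q₁ * M * Q₁ᵀ = u * σᵀ + σ * uᵀ := by
      calc Q₁ * M * Q₁ᵀ = (Q₁ * W) * (Q₁ * R)ᵀ + (Q₁ * R) * (Q₁ * W)ᵀ := by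
            rw [hM]
            simp only [Matrix.transpose_mul, Matrix.mul_add, Matrix.add_mul, Matrix.mul_assoc]
        _ = u * σᵀ + σ * uᵀ := by rw [hQRσ, hQWu]
    have hdiagQMQ : ∀ i, (Q₁ * M * Q₁ᵀ) i i = 0 := by
      intro i
      rw [hQMQ]
      have h1 : (u * σᵀ) i i = ∑ k, u i k * σ i k := by
        simp [Matrix.mul_apply]
      have h2 : (σ * uᵀ) i i = ∑ k, u i k * σ i k := by
        simp [Matrix.mul_apply, mul_comm]
      simp only [Matrix.add_apply, h1, h2, hu i, add_zero]
    have htr0 : ∀ i : Fin n, Matrix.trace (M * vecMulVec (Q₁ i) (Q₁ i)) = 0 := by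
      intro i
      have key : Matrix.trace (M * vecMulVec (Q₁ i) (Q₁ i)) = (Q₁ * M * Q₁ᵀ) i i := by
        simp only [Matrix.trace, Matrix.diag, Matrix.mul_apply, Matrix.vecMulVec_apply,
          Matrix.transpose_apply, Finset.sum_mul, Finset.mul_sum]
        rw [Finset.sum_comm]
        exact Finset.sum_congr rfl fun a _ => Finset.sum_congr rfl fun b _ => by ring
      rw [key, hdiagQMQ i]
    have hMM : Matrix.trace (M * M) = 0 := by
      refine Submodule.span_induction (p := fun X _ => Matrix.trace (M * X) = 0)
        ?_ ?_ ?_ ?_ (hspan M hMsymm)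
      · rintro X ⟨i, rfl⟩; exact htr0 i
      · simp
      · intro X Y _ _ hX hY
        rw [Matrix.mul_add, Matrix.trace_add, hX, hY, add_zero]
      · intro a X _ hX
        rw [Matrix.mul_smul, Matrix.trace_smul, hX, smul_zero]
    have hM0 : M = 0 := by
      apply aux_trace_sq
      rwa [hMsymm.eq]
    have hRWT : R * Wᵀ = -(W * Rᵀ) := by
      have := hM0
      rw [hM] at this
      linear_combination (norm := abel) this
    -- Step 4: R * Rᵀ is invertible
    have hker0 : ∀ x : Fin σ.rank → ℝ, (R * Rᵀ).mulVec x = 0 → x = 0 := by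
      intro x hx
      have h1 : Rᵀ.mulVec x = 0 := by
        rw [← dotProduct_self_eq_zero (v := Rᵀ.mulVec x)]
        rw [Matrix.dotProduct_mulVec, Matrix.vecMul_transpose, Matrix.mulVec_mulVec, hx]
        simp
      have hRT : Rᵀ = σᵀ * Q₁ := by
        rw [hR, Matrix.transpose_mul, Matrix.transpose_transpose]
      have h2 : σᵀ.mulVec (Q₁.mulVec x) = 0 := by
        rw [Matrix.mulVec_mulVec, ← hRT]
        exact h1
      have hmem : Q₁.mulVec x ∈ LinearMap.range σ.mulVecLin := by
        rw [← hQcol]; exact ⟨x, rfl⟩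
      obtain ⟨z, hz⟩ := hmem
      rw [Matrix.mulVecLin_apply] at hz
      have h3 : σ.mulVec z = 0 := by
        rw [← dotProduct_self_eq_zero (v := σ.mulVec z)]
        rw [Matrix.dotProduct_mulVec, ← Matrix.mulVec_transpose, hz, h2, zero_dotProduct]
      have h4 : Q₁.mulVec x = 0 := by rw [← hz, h3]
      have h5 : x = Q₁ᵀ.mulVec (Q₁.mulVec x) := by
        rw [Matrix.mulVec_mulVec, hQ, Matrix.one_mulVec]
      rw [h5, h4, Matrix.mulVec_zero]
    have hunit : IsUnit (R * Rᵀ) := by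
      rw [← Matrix.mulVec_injective_iff_isUnit]
      intro a b hab
      have : (R * Rᵀ).mulVec (a - b) = 0 := by
        rw [Matrix.mulVec_sub, hab, sub_self]
      have := hker0 _ this
      exact sub_eq_zero.mp this
    have hdet : IsUnit (R * Rᵀ).det := (Matrix.isUnit_iff_isUnit_det _).mp hunit
    set G : Matrix (Fin σ.rank) (Fin σ.rank) ℝ := (R * Rᵀ)⁻¹ with hG
    clear_value G
    have hinv : R * Rᵀ * G = 1 := by rw [hG]; exact Matrix.mul_nonsing_inv _ hdet
    have hGT : Gᵀ = G := by
      rw [hG, Matrix.transpose_nonsing_inv, Matrix.transpose_mul, Matrix.transpose_transpose]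
    -- Step 5: construct B
    refine ⟨Rᵀ * G * W - Wᵀ * G * R - Rᵀ * G * W * Rᵀ * G * R, ?_, ?_⟩
    · have h3 : Rᵀ * G * R * Wᵀ * G * R = -(Rᵀ * G * W * Rᵀ * G * R) := by
        rw [show Rᵀ * G * R * Wᵀ = Rᵀ * G * (R * Wᵀ) from by rw [Matrix.mul_assoc]]
        rw [hRWT]
        simp only [Matrix.mul_neg, Matrix.neg_mul, ← Matrix.mul_assoc]
      simp only [Matrix.transpose_sub, Matrix.transpose_mul, Matrix.transpose_transpose, hGT,
        ← Matrix.mul_assoc]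
      rw [h3]
      abel
    · have hRB : R * (Rᵀ * G * W - Wᵀ * G * R - Rᵀ * G * W * Rᵀ * G * R) = W := by
        simp only [Matrix.mul_sub, ← Matrix.mul_assoc, hinv, Matrix.one_mul]
        rw [show R * Wᵀ * G * R = -(W * Rᵀ) * G * R from by rw [hRWT]]
        simp only [Matrix.neg_mul]
        abel
      have hfin : u = Q₁ * R * (Rᵀ * G * W - Wᵀ * G * R - Rᵀ * G * W * Rᵀ * G * R) := by
        rw [Matrix.mul_assoc, hRB, hQWu]
      rw [hfin, hQRσ]
  · rintro ⟨B, hB, rfl⟩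
    rw [Matrix.mul_assoc, ← Matrix.mul_assoc (Λ - A) σ B, hzero, Matrix.zero_mul,
      Matrix.mul_zero, Matrix.trace_zero]
end
end

section
/- (Strict complementarity and dual nondegeneracy imply quadratic decay.) Let σ ∈ M_r and let Λ be an n×n real diagonal matrix such that Λ − A is positive semidefinite and (Λ − A)σ = 0 (so σσᵀ is a primal optimal and Λ encodes a dual optimal solution of the SDP with unit-diagonal constraints). Let r* = rank(σ). Assume strict complementarity: the kernel of Λ − A equals the column space of σ. Assume dual nondegeneracy: there exists Q₁ ∈ ℝ^{n×r*} with orthonormal columns whose column space equals the column space of σ such that, writing q_1,…,q_n ∈ ℝ^{r*} for the rows of Q₁, the matrices q_1 q_1ᵀ, …, q_n q_nᵀ span the space of r*×r* real symmetric matrices. Then there exists μ > 0 such that 2⟨u, (A − Λ)u⟩_F ≤ −μ ‖u‖_F² for every u ∈ T_σ M_r that is Frobenius-orthogonal to V_σ; that is, f satisfies quadratic decay at σ with constant μ. -/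
open Finset Matrix

lemma trace_transpose_mul_self {m p : Type*} [Fintype m] [Fintype p]
    [DecidableEq p] (X : Matrix m p ℝ) :
    Matrix.trace (Xᵀ * X) = ∑ i, ∑ j, X i j ^ 2 := by
  simp [Matrix.trace, Matrix.diag, Matrix.mul_apply, sq]
  exact Finset.sum_comm

lemma trace_transpose_mul_self_nonneg {m p : Type*} [Fintype m] [Fintype p]
    [DecidableEq p] (X : Matrix m p ℝ) :
    0 ≤ Matrix.trace (Xᵀ * X) := by
  rw [trace_transpose_mul_self]; positivity

lemma eq_zero_of_trace_transpose_mul_self {m p : Type*} [Fintype m] [Fintype p]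
    [DecidableEq p] (X : Matrix m p ℝ) (h : Matrix.trace (Xᵀ * X) = 0) : X = 0 := by
  rw [trace_transpose_mul_self] at h
  ext i j
  have h1 : ∀ i ∈ Finset.univ, (0:ℝ) ≤ ∑ j, X i j ^ 2 := fun i _ => by positivity
  have h2 := (Finset.sum_eq_zero_iff_of_nonneg h1).mp h i (Finset.mem_univ i)
  have h3 : ∀ j ∈ Finset.univ, (0:ℝ) ≤ X i j ^ 2 := fun j _ => by positivity
  have := (Finset.sum_eq_zero_iff_of_nonneg h3).mp h2 j (Finset.mem_univ j)
  simpa [pow_eq_zero_iff] using this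

lemma key1 {m p : Type*} [Fintype m] [Fintype p] (Q : Matrix m p ℝ)
    (Y : Matrix p p ℝ) (i : m) :
    Matrix.trace (Y * vecMulVec (Q i) (Q i)) = (Q * Y * Qᵀ) i i := by
  simp only [Matrix.trace, Matrix.diag, Matrix.mul_apply, vecMulVec_apply,
    Matrix.transpose_apply, Finset.sum_mul, Finset.mul_sum]
  rw [Finset.sum_comm]
  exact Finset.sum_congr rfl fun a _ => Finset.sum_congr rfl fun b _ => by ring

lemma col_mul {m p q : Type*} [Fintype m] [Fintype p] [Fintype q]
    (Y : Matrix m p ℝ) (X : Matrix p q ℝ) (k : q) :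
    (fun i => (Y * X) i k) = Y.mulVec (fun i => X i k) := by
  funext i
  simp [Matrix.mul_apply, Matrix.mulVec, dotProduct]

lemma sandwich {a b c : Type*} [Fintype a] [Fintype b] [Fintype c]
    (Q : Matrix a b ℝ) (M R : Matrix b c ℝ) :
    (Q * M) * (Q * R)ᵀ = Q * (M * Rᵀ) * Qᵀ := by
  rw [Matrix.transpose_mul]
  simp [Matrix.mul_assoc]

lemma gram {a b c d : Type*} [Fintype a] [Fintype b] [Fintype c] [Fintype d]
    [DecidableEq b]
    (Q : Matrix a b ℝ) (hQ : Qᵀ * Q = 1) (M : Matrix b c ℝ) (R : Matrix b d ℝ) :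
    (Q * M)ᵀ * (Q * R) = Mᵀ * R := by
  rw [Matrix.transpose_mul, Matrix.mul_assoc, ← Matrix.mul_assoc Qᵀ, hQ, Matrix.one_mul]

lemma key_inj {n r : ℕ}
    (A : Matrix (Fin n) (Fin n) ℝ)
    (σ : Matrix (Fin n) (Fin r) ℝ)
    (Λ : Matrix (Fin n) (Fin n) ℝ)
    (hsc : LinearMap.ker (Λ - A).mulVecLin = LinearMap.range σ.mulVecLin)
    (Q₁ : Matrix (Fin n) (Fin σ.rank) ℝ) (hQ : Q₁ᵀ * Q₁ = 1)
    (hQcol : LinearMap.range Q₁.mulVecLin = LinearMap.range σ.mulVecLin)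
    (hspan : ∀ X : Matrix (Fin σ.rank) (Fin σ.rank) ℝ, X.IsSymm →
      X ∈ Submodule.span ℝ (Set.range fun i : Fin n => vecMulVec (Q₁ i) (Q₁ i)))
    (u : Matrix (Fin n) (Fin r) ℝ)
    (hker : (Λ - A) * u = 0)
    (htan : ∀ i, ∑ k, u i k * σ i k = 0)
    (horth : ∀ B : Matrix (Fin r) (Fin r) ℝ, Bᵀ = -B → Matrix.trace (uᵀ * (σ * B)) = 0) :
    u = 0 := by
  classical
  have hcolu : ∀ k, (fun i => u i k) ∈ LinearMap.range σ.mulVecLin := by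
    intro k
    rw [← hsc, LinearMap.mem_ker]
    have : (Λ - A).mulVecLin (fun i => u i k) = fun i => ((Λ - A) * u) i k := by
      rw [Matrix.mulVecLin_apply, ← col_mul]
    rw [this, hker]
    rfl
  have hcolσ : ∀ k, (fun i => σ i k) ∈ LinearMap.range σ.mulVecLin := by
    intro k
    exact ⟨fun j => if j = k then 1 else 0, by
      funext i; simp [Matrix.mulVecLin_apply, Matrix.mulVec, dotProduct]⟩
  have hproj : ∀ {q : ℕ} (X : Matrix (Fin n) (Fin q) ℝ),
      (∀ k, (fun i => X i k) ∈ LinearMap.range σ.mulVecLin) → Q₁ * (Q₁ᵀ * X) = X := by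
    intro q X hX
    ext i k
    obtain ⟨y, hy⟩ := hQcol ▸ hX k
    rw [Matrix.mulVecLin_apply] at hy
    have hcol : (fun i => (Q₁ * (Q₁ᵀ * X)) i k) = (Q₁ * Q₁ᵀ).mulVec (fun i => X i k) := by
      rw [← Matrix.mul_assoc, col_mul]
    have h2 : (Q₁ * Q₁ᵀ).mulVec (fun i => X i k) = fun i => X i k := by
      rw [← hy, Matrix.mulVec_mulVec, Matrix.mul_assoc, hQ, Matrix.mul_one]
    exact congrFun (hcol.trans h2) i
  obtain ⟨M, hu⟩ : ∃ M, u = Q₁ * M := ⟨_, (hproj u hcolu).symm⟩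
  obtain ⟨R, hσQ⟩ : ∃ R, σ = Q₁ * R := ⟨_, (hproj σ hcolσ).symm⟩
  -- tangency gives W := M * Rᵀ + R * Mᵀ = 0
  have hdiaguσ : ∀ i, (u * σᵀ) i i = 0 := by
    intro i
    have h : (u * σᵀ) i i = ∑ k, u i k * σ i k := by simp [Matrix.mul_apply]
    rw [h]; exact htan i
  set W : Matrix (Fin σ.rank) (Fin σ.rank) ℝ := M * Rᵀ + R * Mᵀ with hWdef
  have hWsymm : W.IsSymm := by
    show Wᵀ = W
    rw [hWdef, Matrix.transpose_add, Matrix.transpose_mul, Matrix.transpose_mul,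
      Matrix.transpose_transpose, Matrix.transpose_transpose, add_comm]
  have h1 : u * σᵀ = Q₁ * (M * Rᵀ) * Q₁ᵀ := by
    have e : u * σᵀ = (Q₁ * M) * (Q₁ * R)ᵀ := by
      rw [hu]; exact congrArg (fun X : Matrix (Fin n) (Fin r) ℝ => Q₁ * M * Xᵀ) hσQ
    rw [e]; exact sandwich Q₁ M R
  have h2 : σ * uᵀ = Q₁ * (R * Mᵀ) * Q₁ᵀ := by
    have e : σ * uᵀ = (Q₁ * R) * (Q₁ * M)ᵀ := by
      rw [hu]; exact congrArg (fun X : Matrix (Fin n) (Fin r) ℝ => X * (Q₁ * M)ᵀ) hσQ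
    rw [e]; exact sandwich Q₁ R M
  have hQWQ : Q₁ * W * Q₁ᵀ = u * σᵀ + σ * uᵀ := by
    rw [h1, h2, hWdef, Matrix.mul_add, Matrix.add_mul]
  have hbase : ∀ i, Matrix.trace (W * vecMulVec (Q₁ i) (Q₁ i)) = 0 := by
    intro i
    rw [key1, hQWQ]
    have ht : σ * uᵀ = (u * σᵀ)ᵀ := by
      rw [Matrix.transpose_mul, Matrix.transpose_transpose]
    have ht2 : (σ * uᵀ) i i = (u * σᵀ) i i := by rw [ht]; rfl
    simp only [Matrix.add_apply, ht2, hdiaguσ i, add_zero]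
  have hvan : ∀ X ∈ Submodule.span ℝ (Set.range fun i : Fin n => vecMulVec (Q₁ i) (Q₁ i)),
      Matrix.trace (W * X) = 0 := by
    intro X hX
    induction hX using Submodule.span_induction with
    | mem x hx => obtain ⟨i, rfl⟩ := hx; exact hbase i
    | zero => simp
    | add x y _ _ hx hy => rw [Matrix.mul_add, Matrix.trace_add, hx, hy, add_zero]
    | smul c x _ hx => rw [Matrix.mul_smul, Matrix.trace_smul, hx, smul_zero]
  have hW0 : W = 0 := by
    apply eq_zero_of_trace_transpose_mul_self
    have hv := hvan W (hspan W hWsymm)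
    rw [show Wᵀ = W from hWsymm]
    exact hv
  -- orthogonality gives Rᵀ * M symmetric
  have huσ : uᵀ * σ = Mᵀ * R := by
    have e : uᵀ * σ = (Q₁ * M)ᵀ * (Q₁ * R) := by
      rw [hu]; exact congrArg (fun X : Matrix (Fin n) (Fin r) ℝ => (Q₁ * M)ᵀ * X) hσQ
    rw [e]; exact gram Q₁ hQ M R
  set K : Matrix (Fin r) (Fin r) ℝ := Rᵀ * M with hKdef
  have hKT : Kᵀ = Mᵀ * R := by
    rw [hKdef, Matrix.transpose_mul, Matrix.transpose_transpose]
  have horth' : ∀ B : Matrix (Fin r) (Fin r) ℝ, Bᵀ = -B → Matrix.trace (Kᵀ * B) = 0 := by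
    intro B hB
    have h := horth B hB
    rwa [← Matrix.mul_assoc, huσ, ← hKT] at h
  have hKsym : K = Kᵀ := by
    set B : Matrix (Fin r) (Fin r) ℝ := K - Kᵀ with hBdef
    have hB : Bᵀ = -B := by
      rw [hBdef, Matrix.transpose_sub, Matrix.transpose_transpose, neg_sub]
    have hb1 : Matrix.trace (Kᵀ * B) = 0 := horth' B hB
    have hb2 : Matrix.trace (K * B) = 0 := by
      have h := Matrix.trace_transpose (K * B)
      rw [Matrix.transpose_mul, hB, Matrix.neg_mul, Matrix.trace_neg,
        Matrix.trace_mul_comm, hb1, neg_zero] at h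
      exact h.symm
    have hBB : Matrix.trace (Bᵀ * B) = 0 := by
      have hBe : Bᵀ * B = -(K * B) + Kᵀ * B := by rw [hB, hBdef]; noncomm_ring
      rw [hBe, Matrix.trace_add, Matrix.trace_neg, hb1, hb2, neg_zero, add_zero]
    have hB0 := eq_zero_of_trace_transpose_mul_self B hBB
    rw [hBdef] at hB0
    exact sub_eq_zero.mp hB0
  have hKM : Rᵀ * M = Mᵀ * R := by rw [← hKdef, hKsym, hKT]
  have hMR : R * Mᵀ = -(M * Rᵀ) := by
    have h0 : M * Rᵀ + R * Mᵀ = 0 := hW0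
    linear_combination (norm := abel) h0
  have e1 : Kᵀ * K = -(Mᵀ * (M * (Rᵀ * R))) := by
    rw [hKT, hKdef]
    calc Mᵀ * R * (Rᵀ * M) = Mᵀ * (R * (Rᵀ * M)) := by rw [Matrix.mul_assoc]
      _ = Mᵀ * (R * (Mᵀ * R)) := by rw [hKM]
      _ = Mᵀ * ((R * Mᵀ) * R) := by rw [Matrix.mul_assoc]
      _ = Mᵀ * ((-(M * Rᵀ)) * R) := by rw [hMR]
      _ = -(Mᵀ * (M * (Rᵀ * R))) := by
            rw [Matrix.neg_mul, Matrix.mul_neg]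
            congr 1
            simp [Matrix.mul_assoc]
  have e3 : Matrix.trace ((M * Rᵀ)ᵀ * (M * Rᵀ)) = Matrix.trace (Mᵀ * (M * (Rᵀ * R))) := by
    rw [Matrix.transpose_mul, Matrix.transpose_transpose, Matrix.mul_assoc,
      Matrix.trace_mul_comm]
    congr 1
    simp [Matrix.mul_assoc]
  have hT1 : Matrix.trace (Kᵀ * K) = -(Matrix.trace ((M * Rᵀ)ᵀ * (M * Rᵀ))) := by
    rw [e1, Matrix.trace_neg, e3]
  have hK0 : K = 0 := by
    apply eq_zero_of_trace_transpose_mul_self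
    have hn1 : 0 ≤ Matrix.trace (Kᵀ * K) := trace_transpose_mul_self_nonneg K
    have hn2 : 0 ≤ Matrix.trace ((M * Rᵀ)ᵀ * (M * Rᵀ)) :=
      trace_transpose_mul_self_nonneg (M * Rᵀ)
    linarith
  have hσu : σᵀ * u = 0 := by
    have h : σᵀ * u = Rᵀ * M := by
      have e : σᵀ * u = (Q₁ * R)ᵀ * (Q₁ * M) := by
        rw [hu]; exact congrArg (fun X : Matrix (Fin n) (Fin r) ℝ => Xᵀ * (Q₁ * M)) hσQ
      rw [e]; exact gram Q₁ hQ R M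
    rw [h, ← hKdef, hK0]
  choose c hc using hcolu
  set C : Matrix (Fin r) (Fin r) ℝ := Matrix.of (fun j k => c k j) with hCdef
  have huC : u = σ * C := by
    ext i k
    have h := congrFun (hc k) i
    rw [Matrix.mulVecLin_apply] at h
    simp only [Matrix.mul_apply, hCdef, Matrix.of_apply]
    rw [← h]
    simp [Matrix.mulVec, dotProduct]
  apply eq_zero_of_trace_transpose_mul_self
  have hT : uᵀ = Cᵀ * σᵀ := by rw [huC, Matrix.transpose_mul]
  rw [hT, Matrix.mul_assoc, hσu, Matrix.mul_zero, Matrix.trace_zero]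

open scoped BigOperators

noncomputable section

lemma trace_form {n r : ℕ} (N : Matrix (Fin n) (Fin n) ℝ) (u : Matrix (Fin n) (Fin r) ℝ) :
    Matrix.trace (uᵀ * N * u) = ∑ k, ∑ j, (∑ i, u i k * N i j) * u j k := by
  simp [Matrix.trace, Matrix.diag, Matrix.mul_apply]

lemma trace_mul_form {n r : ℕ} (u Y : Matrix (Fin n) (Fin r) ℝ) :
    Matrix.trace (uᵀ * Y) = ∑ k, ∑ i, u i k * Y i k := by
  simp [Matrix.trace, Matrix.diag, Matrix.mul_apply]

lemma smul_form {n r : ℕ} (a : ℝ) (N : Matrix (Fin n) (Fin n) ℝ)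
    (u : Matrix (Fin n) (Fin r) ℝ) :
    (a • u)ᵀ * N * (a • u) = (a * a) • (uᵀ * N * u) := by
  rw [Matrix.transpose_smul, Matrix.smul_mul, Matrix.smul_mul, Matrix.mul_smul, smul_smul]

/-- strict complementarity and dual nondegeneracy imply quadratic decay:
there is `μ > 0` with `2⟨u, (A − Λ)u⟩_F ≤ −μ‖u‖_F²` for all tangent `u`
Frobenius-orthogonal to `V_σ`. -/
theorem strict_complementarity_quad_decay {n r : ℕ} (hn : 0 < n) (hr : 0 < r)
    (A : Matrix (Fin n) (Fin n) ℝ) (hA : A.IsSymm) (hdiag : ∀ i, A i i = 0)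
    (σ : Matrix (Fin n) (Fin r) ℝ) (hσ : ∀ i, ∑ k, σ i k ^ 2 = 1)
    (Λ : Matrix (Fin n) (Fin n) ℝ) (hΛ : Λ.IsDiag)
    (hpsd : (Λ - A).PosSemidef) (hzero : (Λ - A) * σ = 0)
    (hsc : LinearMap.ker (Λ - A).mulVecLin = LinearMap.range σ.mulVecLin)
    (Q₁ : Matrix (Fin n) (Fin σ.rank) ℝ) (hQ : Q₁ᵀ * Q₁ = 1)
    (hQcol : LinearMap.range Q₁.mulVecLin = LinearMap.range σ.mulVecLin)
    (hspan : ∀ X : Matrix (Fin σ.rank) (Fin σ.rank) ℝ, X.IsSymm →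
      X ∈ Submodule.span ℝ (Set.range fun i : Fin n => vecMulVec (Q₁ i) (Q₁ i))) :
    ∃ μ : ℝ, 0 < μ ∧ ∀ u : Matrix (Fin n) (Fin r) ℝ,
      (∀ i, ∑ k, u i k * σ i k = 0) →
      (∀ B : Matrix (Fin r) (Fin r) ℝ, Bᵀ = -B → Matrix.trace (uᵀ * (σ * B)) = 0) →
      2 * Matrix.trace (uᵀ * (A - Λ) * u) ≤ -μ * ∑ i, ∑ k, u i k ^ 2 := by
  classical
  -- square root of Λ - A
  obtain ⟨Bs, hBsym, hBB⟩ : ∃ Bs : Matrix (Fin n) (Fin n) ℝ, Bsᵀ = Bs ∧ Bs * Bs = Λ - A := by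
    open scoped MatrixOrder in
    refine ⟨CFC.sqrt (Λ - A), ?_, CFC.sqrt_mul_sqrt_self _ hpsd.nonneg⟩
    open scoped MatrixOrder in
    have h := (CFC.sqrt_nonneg (Λ - A)).posSemidef.1
    rwa [Matrix.IsHermitian, Matrix.conjTranspose_eq_transpose_of_trivial] at h
  have hq_eq : ∀ u : Matrix (Fin n) (Fin r) ℝ,
      uᵀ * (Λ - A) * u = (Bs * u)ᵀ * (Bs * u) := by
    intro u
    rw [Matrix.transpose_mul, hBsym, ← hBB]
    simp [Matrix.mul_assoc]
  have hq_nonneg : ∀ u : Matrix (Fin n) (Fin r) ℝ,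
      0 ≤ Matrix.trace (uᵀ * (Λ - A) * u) := fun u => by
    rw [hq_eq]; exact trace_transpose_mul_self_nonneg _
  have hq_zero : ∀ u : Matrix (Fin n) (Fin r) ℝ,
      Matrix.trace (uᵀ * (Λ - A) * u) = 0 → (Λ - A) * u = 0 := by
    intro u h
    rw [hq_eq] at h
    have h0 := eq_zero_of_trace_transpose_mul_self _ h
    calc (Λ - A) * u = Bs * (Bs * u) := by rw [← Matrix.mul_assoc, hBB]
      _ = 0 := by rw [h0, Matrix.mul_zero]
  have hAL : ∀ u : Matrix (Fin n) (Fin r) ℝ,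
      Matrix.trace (uᵀ * (A - Λ) * u) = -Matrix.trace (uᵀ * (Λ - A) * u) := by
    intro u
    rw [show A - Λ = -(Λ - A) from (neg_sub Λ A).symm, Matrix.mul_neg, Matrix.neg_mul,
      Matrix.trace_neg]
  -- the injectivity fact on the constrained subspace
  have hinj : ∀ u : Matrix (Fin n) (Fin r) ℝ,
      (∀ i, ∑ k, u i k * σ i k = 0) →
      (∀ B : Matrix (Fin r) (Fin r) ℝ, Bᵀ = -B → Matrix.trace (uᵀ * (σ * B)) = 0) →
      Matrix.trace (uᵀ * (Λ - A) * u) = 0 → u = 0 := by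
    intro u h1 h2 h3
    exact key_inj A σ Λ hsc Q₁ hQ hQcol hspan u (hq_zero u h3) h1 h2
  -- Euclidean space setup
  set E := EuclideanSpace ℝ (Fin n × Fin r) with hE
  let toE : Matrix (Fin n) (Fin r) ℝ → E := fun u => WithLp.toLp 2 (fun p : Fin n × Fin r => u p.1 p.2)
  let ofE : E → Matrix (Fin n) (Fin r) ℝ := fun v => Matrix.of fun i k => v (i, k)
  have hofto : ∀ u, ofE (toE u) = u := fun u => rfl
  have hofsmul : ∀ (c : ℝ) (v : E), ofE (c • v) = c • ofE v := fun c v => rfl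
  -- the quadratic form as a function on E
  let Φ : E → ℝ := fun v =>
    ∑ k, ∑ j, (∑ i, v (i, k) * (Λ - A) i j) * v (j, k)
  have hΦ : ∀ v : E, Φ v = Matrix.trace ((ofE v)ᵀ * (Λ - A) * ofE v) := by
    intro v
    rw [trace_form]
    rfl
  have hcoord : ∀ p : Fin n × Fin r, Continuous fun v : E => v p := fun p =>
    (EuclideanSpace.proj p).continuous
  have hΦcont : Continuous Φ := by
    apply continuous_finset_sum
    intro k _
    apply continuous_finset_sum
    intro j _
    exact (continuous_finset_sum _ fun i _ =>
      (hcoord (i, k)).mul continuous_const).mul (hcoord (j, k))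
  -- the constraint set
  let T1 : Set E := {v | ∀ i, ∑ k, v (i, k) * σ i k = 0}
  let T2 : Set E := {v | ∀ B : Matrix (Fin r) (Fin r) ℝ, Bᵀ = -B →
    Matrix.trace ((ofE v)ᵀ * (σ * B)) = 0}
  have hT1closed : IsClosed T1 := by
    have he : T1 = ⋂ i, {v : E | ∑ k, v (i, k) * σ i k = 0} := by
      ext v; simp [T1, Set.mem_iInter]
    rw [he]
    exact isClosed_iInter fun i => isClosed_eq
      (continuous_finset_sum _ fun k _ => (hcoord (i, k)).mul continuous_const)
      continuous_const
  have hT2closed : IsClosed T2 := by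
    have he : T2 = ⋂ (B : Matrix (Fin r) (Fin r) ℝ), ⋂ (_ : Bᵀ = -B),
        {v : E | Matrix.trace ((ofE v)ᵀ * (σ * B)) = 0} := by
      ext v; simp [T2, Set.mem_iInter]
    rw [he]
    refine isClosed_iInter fun B => isClosed_iInter fun hB => ?_
    have hfe : (fun v : E => Matrix.trace ((ofE v)ᵀ * (σ * B)))
        = fun v : E => ∑ k, ∑ i, v (i, k) * (σ * B) i k := by
      funext v
      rw [trace_mul_form]
      rfl
    apply isClosed_eq _ continuous_const
    rw [hfe]
    exact continuous_finset_sum _ fun k _ => continuous_finset_sum _ fun i _ =>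
      (hcoord (i, k)).mul continuous_const
  let Kset : Set E := Metric.sphere (0 : E) 1 ∩ (T1 ∩ T2)
  have hKcpt : IsCompact Kset :=
    (isCompact_sphere (0 : E) 1).inter_right (hT1closed.inter hT2closed)
  -- scaled elements belong to Kset
  have htoE_ne : ∀ w : Matrix (Fin n) (Fin r) ℝ, w ≠ 0 → toE w ≠ 0 := by
    intro w hw h
    exact hw (by ext i k; exact congrArg (fun v : E => v (i, k)) h)
  have hmem : ∀ w : Matrix (Fin n) (Fin r) ℝ, w ≠ 0 →
      (∀ i, ∑ k, w i k * σ i k = 0) →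
      (∀ B : Matrix (Fin r) (Fin r) ℝ, Bᵀ = -B → Matrix.trace (wᵀ * (σ * B)) = 0) →
      (‖toE w‖⁻¹ • toE w) ∈ Kset := by
    intro w hw h1 h2
    have hnw : ‖toE w‖ ≠ 0 := norm_ne_zero_iff.mpr (htoE_ne w hw)
    refine ⟨?_, ?_, ?_⟩
    · rw [mem_sphere_zero_iff_norm, norm_smul, norm_inv, norm_norm]
      exact inv_mul_cancel₀ hnw
    · intro i
      have happ : ∀ p : Fin n × Fin r, (‖toE w‖⁻¹ • toE w) p = ‖toE w‖⁻¹ * w p.1 p.2 :=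
        fun p => rfl
      calc ∑ k, (‖toE w‖⁻¹ • toE w) (i, k) * σ i k
          = ∑ k, ‖toE w‖⁻¹ * (w i k * σ i k) := by
            refine Finset.sum_congr rfl fun k _ => ?_
            rw [happ (i, k)]; ring
        _ = ‖toE w‖⁻¹ * ∑ k, w i k * σ i k := (Finset.mul_sum _ _ _).symm
        _ = 0 := by rw [h1 i, mul_zero]
    · intro B hB
      have he : ofE (‖toE w‖⁻¹ • toE w) = ‖toE w‖⁻¹ • w := rfl
      rw [he, Matrix.transpose_smul, Matrix.smul_mul, Matrix.trace_smul, h2 B hB, smul_zero]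
  -- case split on whether the subspace is trivial
  by_cases hall : ∀ u : Matrix (Fin n) (Fin r) ℝ,
      (∀ i, ∑ k, u i k * σ i k = 0) →
      (∀ B : Matrix (Fin r) (Fin r) ℝ, Bᵀ = -B → Matrix.trace (uᵀ * (σ * B)) = 0) → u = 0
  · refine ⟨1, one_pos, fun u h1 h2 => ?_⟩
    have h0 := hall u h1 h2
    subst h0
    simp
  · push_neg at hall
    obtain ⟨w, hw1, hw2, hw0⟩ := hall
    have hne : Kset.Nonempty := ⟨_, hmem w hw0 hw1 hw2⟩
    obtain ⟨v₁, hv₁K, hminv⟩ := hKcpt.exists_isMinOn hne hΦcont.continuousOn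
    obtain ⟨hv₁s, hv₁1, hv₁2⟩ := hv₁K
    -- μ := Φ v₁ > 0
    have hv₁tan : ∀ i, ∑ k, (ofE v₁) i k * σ i k = 0 := hv₁1
    have hμnonneg : 0 ≤ Φ v₁ := by rw [hΦ]; exact hq_nonneg (ofE v₁)
    have hμpos : 0 < Φ v₁ := by
      rcases lt_or_eq_of_le hμnonneg with h | h
      · exact h
      · exfalso
        have h0 : Matrix.trace ((ofE v₁)ᵀ * (Λ - A) * ofE v₁) = 0 := by
          rw [← hΦ, ← h]
        have hz := hinj (ofE v₁) hv₁tan hv₁2 h0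
        have : v₁ = 0 := by
          ext p
          have := congrFun (congrFun hz p.1) p.2
          exact this
        rw [mem_sphere_zero_iff_norm, this, norm_zero] at hv₁s
        exact one_ne_zero hv₁s.symm
    refine ⟨Φ v₁, hμpos, fun u h1 h2 => ?_⟩
    by_cases hu0 : u = 0
    · subst hu0; simp
    · have hnu : ‖toE u‖ ≠ 0 := norm_ne_zero_iff.mpr (htoE_ne u hu0)
      have hcpos : 0 < ‖toE u‖ := lt_of_le_of_ne (norm_nonneg _) (Ne.symm hnu)
      have hvK := hmem u hu0 h1 h2
      have hle : Φ v₁ ≤ Φ (‖toE u‖⁻¹ • toE u) := isMinOn_iff.mp hminv _ hvK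
      have h5 : Φ (‖toE u‖⁻¹ • toE u)
          = (‖toE u‖⁻¹ * ‖toE u‖⁻¹) * Matrix.trace (uᵀ * (Λ - A) * u) := by
        rw [hΦ, hofsmul, hofto, smul_form, Matrix.trace_smul, smul_eq_mul]
      have hS : ‖toE u‖ ^ 2 = ∑ i, ∑ k, u i k ^ 2 := by
        have hh : ‖toE u‖ ^ 2 = ∑ p : Fin n × Fin r, (toE u p) ^ 2 := by
          rw [EuclideanSpace.norm_eq, Real.sq_sqrt (by positivity)]
          simp [sq_abs]
        rw [hh, Fintype.sum_prod_type]
      rw [hAL u, ← hS]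
      have h3 : Φ v₁ * ‖toE u‖ ^ 2
          ≤ ((‖toE u‖⁻¹ * ‖toE u‖⁻¹) * Matrix.trace (uᵀ * (Λ - A) * u)) * ‖toE u‖ ^ 2 := by
        refine mul_le_mul_of_nonneg_right ?_ (sq_nonneg _)
        rw [← h5]; exact hle
      have h4 : ((‖toE u‖⁻¹ * ‖toE u‖⁻¹) * Matrix.trace (uᵀ * (Λ - A) * u)) * ‖toE u‖ ^ 2
          = Matrix.trace (uᵀ * (Λ - A) * u) := by
        have hone : (‖toE u‖⁻¹ * ‖toE u‖⁻¹) * ‖toE u‖ ^ 2 = 1 := by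
          rw [sq]
          field_simp
        calc ((‖toE u‖⁻¹ * ‖toE u‖⁻¹) * Matrix.trace (uᵀ * (Λ - A) * u)) * ‖toE u‖ ^ 2
            = Matrix.trace (uᵀ * (Λ - A) * u) * ((‖toE u‖⁻¹ * ‖toE u‖⁻¹) * ‖toE u‖ ^ 2) := by
              ring
          _ = Matrix.trace (uᵀ * (Λ - A) * u) := by rw [hone, mul_one]
      have h6 := hq_nonneg u
      linarith

end
end

section
/- (Ascent achieved by a second-order step.) Let A be a nonzero n×n real symmetric matrix and let 0 < ε ≤ 15‖A‖₁. Let σ ∈ M_r and u ∈ T_σ M_r with ‖u‖_F = 1, G_σ(u) ≥ 0, and H_σ(u) ≥ ε/2. Then, with step size t = ε/(15‖A‖₁), the geodesic step satisfies f(σ(t)) − f(σ) ≥ ε³/(2700 ‖A‖₁²). -/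
open scoped BigOperators RealInnerProductSpace
open Finset Matrix

noncomputable section

private lemma sin_err {y : ℝ} (h0 : 0 ≤ y) (h1 : y ≤ 1) :
    |Real.sin y - y| ≤ 21/96 * y^3 := by
  have hb := Real.sin_bound (x := y) (by rwa [abs_of_nonneg h0])
  rw [abs_of_nonneg h0, abs_le] at hb
  have h4 : y^4 ≤ y^3 := pow_le_pow_of_le_one h0 h1 (by norm_num)
  rw [abs_le]; constructor <;> nlinarith [pow_nonneg h0 3]

private lemma cos_err {x : ℝ} (h0 : 0 ≤ x) (h1 : x ≤ 1) :
    |Real.cos x - (1 - x^2/2)| ≤ 5/96 * x^3 := by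
  have hb := Real.cos_bound (x := x) (by rwa [abs_of_nonneg h0])
  rw [abs_of_nonneg h0, abs_le] at hb
  have h4 : x^4 ≤ x^3 := pow_le_pow_of_le_one h0 h1 (by norm_num)
  rw [abs_le]; constructor <;> nlinarith [pow_nonneg h0 3]

private lemma scalar_cos {x y : ℝ} (hx0 : 0 ≤ x) (hx1 : x ≤ 1) (hy0 : 0 ≤ y) (hy1 : y ≤ 1) :
    |Real.cos x * Real.cos y - 1 + (x^2 + y^2)/2| ≤ 17/96 * (x^3 + y^3) := by
  have hcx := cos_err hx0 hx1
  have hcy := cos_err hy0 hy1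
  have hcy1 : |Real.cos y| ≤ 1 := Real.abs_cos_le_one y
  have hx2 : |1 - x^2/2| ≤ 1 := by rw [abs_le]; constructor <;> nlinarith
  have key : |Real.cos x * Real.cos y - (1 - x^2/2)*(1 - y^2/2)| ≤ 5/96*x^3 + 5/96*y^3 := by
    have : Real.cos x * Real.cos y - (1 - x^2/2)*(1 - y^2/2)
        = (Real.cos x - (1 - x^2/2)) * Real.cos y + (1 - x^2/2) * (Real.cos y - (1 - y^2/2)) := by
      ring
    rw [this]
    calc _ ≤ |(Real.cos x - (1 - x^2/2)) * Real.cos y| + |(1 - x^2/2) * (Real.cos y - (1 - y^2/2))| :=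
          abs_add_le _ _
      _ ≤ 5/96*x^3 + 5/96*y^3 := by
          rw [abs_mul, abs_mul]
          have h1 : |Real.cos x - (1 - x^2/2)| * |Real.cos y| ≤ 5/96*x^3 * 1 :=
            mul_le_mul hcx hcy1 (abs_nonneg _) (by positivity)
          have h2 : |1 - x^2/2| * |Real.cos y - (1 - y^2/2)| ≤ 1 * (5/96*y^3) :=
            mul_le_mul hx2 hcy (abs_nonneg _) (by norm_num)
          nlinarith
  have hsq : x^2*y^2/4 ≤ (x^3+y^3)/8 := by nlinarith [sq_nonneg (x-y), sq_nonneg (x*y), pow_le_pow_of_le_one hx0 hx1 (show 3 ≤ 4 by norm_num), pow_le_pow_of_le_one hy0 hy1 (show 3 ≤ 4 by norm_num), sq_nonneg (x^2 - y^2)]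
  rw [abs_le] at key ⊢
  constructor <;> nlinarith [pow_nonneg hx0 3, pow_nonneg hy0 3]

private lemma scalar_mixed {x y : ℝ} (hx0 : 0 ≤ x) (hx1 : x ≤ 1) (hy0 : 0 ≤ y) (hy1 : y ≤ 1) :
    |Real.cos x * Real.sin y - y| ≤ 32/96 * x^3 + 37/96 * y^3 := by
  have hsy := sin_err hy0 hy1
  have hcx := cos_err hx0 hx1
  have h : Real.cos x * Real.sin y - y
      = Real.cos x * (Real.sin y - y) + (Real.cos x - 1) * y := by ring
  rw [h]
  have hcx1 : |Real.cos x| ≤ 1 := Real.abs_cos_le_one x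
  have h1 : |Real.cos x * (Real.sin y - y)| ≤ 21/96*y^3 := by
    rw [abs_mul]
    calc |Real.cos x| * |Real.sin y - y| ≤ 1 * (21/96*y^3) :=
      mul_le_mul hcx1 hsy (abs_nonneg _) one_pos.le
    _ = 21/96*y^3 := one_mul _
  have h2 : |(Real.cos x - 1) * y| ≤ 32/96*x^3 + 16/96*y^3 := by
    rw [abs_mul]
    have hc1 : |Real.cos x - 1| ≤ x^2/2 := by
      rw [abs_le]
      constructor
      · have := Real.one_sub_sq_div_two_le_cos (x := x); linarith
      · have := Real.cos_le_one x; nlinarith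
    have : |Real.cos x - 1| * |y| ≤ (x^2/2) * y := by
      rw [abs_of_nonneg hy0]; exact mul_le_mul_of_nonneg_right hc1 hy0
    nlinarith [sq_nonneg (x - y), mul_nonneg (mul_nonneg hx0 hx0) hy0, mul_nonneg hx0 (mul_nonneg hy0 hy0)]
  calc _ ≤ |Real.cos x * (Real.sin y - y)| + |(Real.cos x - 1) * y| := abs_add_le _ _
    _ ≤ 32/96 * x^3 + 37/96 * y^3 := by linarith

private lemma scalar_sinsin {x y : ℝ} (hx0 : 0 ≤ x) (hx1 : x ≤ 1) (hy0 : 0 ≤ y) (hy1 : y ≤ 1) :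
    |Real.sin x * Real.sin y - x*y| ≤ 21/96 * (x^3 + y^3) := by
  have hsy := sin_err hy0 hy1
  have hsx := sin_err hx0 hx1
  have h : Real.sin x * Real.sin y - x*y
      = Real.sin x * (Real.sin y - y) + (Real.sin x - x) * y := by ring
  rw [h]
  have hax : |Real.sin x| ≤ x := by
    have := Real.abs_sin_le_abs (x := x); rwa [abs_of_nonneg hx0] at this
  have h1 : |Real.sin x * (Real.sin y - y)| ≤ 21/96*y^3 := by
    rw [abs_mul]
    calc |Real.sin x| * |Real.sin y - y| ≤ 1 * (21/96*y^3) :=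
      mul_le_mul (hax.trans hx1) hsy (abs_nonneg _) one_pos.le
    _ = _ := one_mul _
  have h2 : |(Real.sin x - x) * y| ≤ 21/96*x^3 := by
    rw [abs_mul, abs_of_nonneg hy0]
    calc |Real.sin x - x| * y ≤ (21/96*x^3) * 1 := mul_le_mul hsx hy1 hy0 (by positivity)
    _ = _ := mul_one _
  calc _ ≤ |Real.sin x * (Real.sin y - y)| + |(Real.sin x - x) * y| := abs_add_le _ _
    _ ≤ 21/96 * (x^3 + y^3) := by linarith

set_option maxHeartbeats 1000000 in
private lemma pair_bound' {t a b : ℝ} (ht0 : 0 ≤ t) (ht1 : t ≤ 1)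
    (ha0 : 0 ≤ a) (hp : a ≤ 1) (hb0 : 0 ≤ b) (hq : b ≤ 1)
    {E1 E2 E3 E4 I1 I2 I3 I4 : ℝ}
    (hE1 : E1 = Real.cos (a*t) * Real.cos (b*t) - 1 + (a^2 + b^2)*t^2/2)
    (hE2 : E2 = Real.cos (a*t) * (Real.sin (b*t)/b) - t)
    (hE3 : E3 = (Real.sin (a*t)/a) * Real.cos (b*t) - t)
    (hE4 : E4 = (Real.sin (a*t)/a) * (Real.sin (b*t)/b) - t^2)
    (hI1 : |I1| ≤ 1) (hI2 : |I2| ≤ b) (hI3 : |I3| ≤ a) (hI4 : |I4| ≤ a*b) :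
    |E1*I1 + E2*I2 + E3*I3 + E4*I4| ≤ 5/4 * t^3 * (a^3 + b^3) := by
  have hat0 : 0 ≤ a*t := mul_nonneg ha0 ht0
  have hbt0 : 0 ≤ b*t := mul_nonneg hb0 ht0
  have hat1 : a*t ≤ 1 := by nlinarith
  have hbt1 : b*t ≤ 1 := by nlinarith
  have c1 : |E1| ≤ 17/96 * ((a*t)^3 + (b*t)^3) := by
    have h := scalar_cos hat0 hat1 hbt0 hbt1
    have : E1 = Real.cos (a*t) * Real.cos (b*t) - 1 + ((a*t)^2 + (b*t)^2)/2 := by rw [hE1]; ring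
    rw [this]; exact h
  have c2 : |E2 * b| ≤ 32/96 * (a*t)^3 + 37/96 * (b*t)^3 := by
    have h := scalar_mixed hat0 hat1 hbt0 hbt1
    rcases eq_or_ne b 0 with h0 | h0
    · rw [hE2, h0]; simp; positivity
    · have : E2 * b = Real.cos (a*t) * Real.sin (b*t) - b*t := by
        rw [hE2]; field_simp; try ring
      rw [this]; exact h
  have c3 : |E3 * a| ≤ 37/96 * (a*t)^3 + 32/96 * (b*t)^3 := by
    have h := scalar_mixed hbt0 hbt1 hat0 hat1
    rcases eq_or_ne a 0 with h0 | h0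
    · rw [hE3, h0]; simp; positivity
    · have he : E3 * a = Real.cos (b*t) * Real.sin (a*t) - a*t := by
        rw [hE3]; field_simp; try ring
      rw [he]
      calc |Real.cos (b*t) * Real.sin (a*t) - a*t| ≤ 32/96*(b*t)^3 + 37/96*(a*t)^3 := h
        _ = 37/96 * (a*t)^3 + 32/96 * (b*t)^3 := by ring
  have c4 : |E4 * (a*b)| ≤ 21/96 * ((a*t)^3 + (b*t)^3) := by
    have h := scalar_sinsin hat0 hat1 hbt0 hbt1
    rcases eq_or_ne a 0 with h0 | h0
    · rw [hE4, h0]; simp; positivity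
    rcases eq_or_ne b 0 with h1 | h1
    · rw [hE4, h1]; simp; positivity
    · have he : E4 * (a*b) = Real.sin (a*t) * Real.sin (b*t) - (a*t)*(b*t) := by
        rw [hE4]; field_simp; try ring
      rw [he]
      calc |Real.sin (a*t) * Real.sin (b*t) - (a*t)*(b*t)| ≤ 21/96*((a*t)^3+(b*t)^3) := h
        _ = _ := rfl
  have t1 : |E1*I1| ≤ 17/96 * ((a*t)^3 + (b*t)^3) := by
    rw [abs_mul]
    calc |E1| * |I1| ≤ (17/96 * ((a*t)^3 + (b*t)^3)) * 1 :=
      mul_le_mul c1 hI1 (abs_nonneg _) (by positivity)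
    _ = _ := mul_one _
  have t2 : |E2*I2| ≤ 32/96 * (a*t)^3 + 37/96 * (b*t)^3 := by
    rw [abs_mul]
    calc |E2| * |I2| ≤ |E2| * b := mul_le_mul_of_nonneg_left hI2 (abs_nonneg _)
      _ = |E2 * b| := by rw [abs_mul, abs_of_nonneg hb0]
      _ ≤ _ := c2
  have t3 : |E3*I3| ≤ 37/96 * (a*t)^3 + 32/96 * (b*t)^3 := by
    rw [abs_mul]
    calc |E3| * |I3| ≤ |E3| * a := mul_le_mul_of_nonneg_left hI3 (abs_nonneg _)
      _ = |E3 * a| := by rw [abs_mul, abs_of_nonneg ha0]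
      _ ≤ _ := c3
  have t4 : |E4*I4| ≤ 21/96 * ((a*t)^3 + (b*t)^3) := by
    rw [abs_mul]
    calc |E4| * |I4| ≤ |E4| * (a*b) := mul_le_mul_of_nonneg_left hI4 (abs_nonneg _)
      _ = |E4 * (a*b)| := by rw [abs_mul, abs_of_nonneg (mul_nonneg ha0 hb0)]
      _ ≤ _ := c4
  have habs : |E1*I1 + E2*I2 + E3*I3 + E4*I4| ≤ |E1*I1| + |E2*I2| + |E3*I3| + |E4*I4| := by
    calc _ ≤ |E1*I1 + E2*I2 + E3*I3| + |E4*I4| := abs_add_le _ _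
      _ ≤ |E1*I1 + E2*I2| + |E3*I3| + |E4*I4| := by
          have := abs_add_le (E1*I1 + E2*I2) (E3*I3); linarith
      _ ≤ _ := by have := abs_add_le (E1*I1) (E2*I2); linarith
  have hfin : 17/96*((a*t)^3+(b*t)^3) + (32/96*(a*t)^3+37/96*(b*t)^3)
      + (37/96*(a*t)^3+32/96*(b*t)^3) + 21/96*((a*t)^3+(b*t)^3) ≤ 5/4*t^3*(a^3+b^3) := by
    have hX : (0:ℝ) ≤ (a*t)^3 := pow_nonneg hat0 3
    have hY : (0:ℝ) ≤ (b*t)^3 := pow_nonneg hbt0 3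
    have e : 5/4*t^3*(a^3+b^3) = 5/4*((a*t)^3+(b*t)^3) := by ring
    rw [e]
    linarith
  linarith

private lemma inner_geo {n r : ℕ} (σ u : Conf n r) (t : ℝ) (i j : Fin n) :
    ⟪geo σ u t i, geo σ u t j⟫ =
      Real.cos (‖u i‖*t) * Real.cos (‖u j‖*t) * ⟪σ i, σ j⟫
      + Real.cos (‖u i‖*t) * (Real.sin (‖u j‖*t)/‖u j‖) * ⟪σ i, u j⟫
      + (Real.sin (‖u i‖*t)/‖u i‖) * Real.cos (‖u j‖*t) * ⟪u i, σ j⟫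
      + (Real.sin (‖u i‖*t)/‖u i‖) * (Real.sin (‖u j‖*t)/‖u j‖) * ⟪u i, u j⟫ := by
  simp only [geo, inner_add_left, inner_add_right, real_inner_smul_left, real_inner_smul_right]
  ring

private lemma inner_geo_self {n r : ℕ} (σ u : Conf n r) (t : ℝ)
    (hσ : inM σ) (hu : tangent σ u) (i : Fin n) :
    ⟪geo σ u t i, geo σ u t i⟫ = ⟪σ i, σ i⟫ := by
  rw [inner_geo]
  have h1 : ⟪σ i, σ i⟫ = 1 := by
    have := real_inner_self_eq_norm_sq (σ i); rw [hσ i] at this; simpa using this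
  have h2 : ⟪u i, σ i⟫ = (0:ℝ) := hu i
  have h3 : ⟪σ i, u i⟫ = (0:ℝ) := by rw [real_inner_comm]; exact hu i
  rcases eq_or_ne (‖u i‖) 0 with h0 | h0
  · have hz : u i = 0 := norm_eq_zero.mp h0
    simp [hz, h0, h1]
  · have h4 : ⟪u i, u i⟫ = ‖u i‖^2 := real_inner_self_eq_norm_sq _
    rw [h1, h2, h3, h4]
    have hsc := Real.sin_sq_add_cos_sq (‖u i‖*t)
    have hsc' : ‖u i‖ * (Real.sin (‖u i‖*t) ^ 2 + Real.cos (‖u i‖*t) ^ 2) = ‖u i‖ * 1 := by rw [hsc]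
    field_simp
    nlinarith [hsc, hsc']

private lemma gvec_inner {n r : ℕ} (A : Matrix (Fin n) (Fin n) ℝ) (σ τ : Conf n r) (i : Fin n) :
    ⟪τ i, gvec A σ i⟫ = ∑ j, (if i = j then 0 else A i j) * ⟪τ i, σ j⟫ := by
  rw [gvec, inner_sum]
  rw [← Finset.add_sum_erase Finset.univ
      (fun j => (if i = j then (0:ℝ) else A i j) * ⟪τ i, σ j⟫) (Finset.mem_univ i)]
  rw [if_pos rfl, zero_mul, zero_add]
  refine Finset.sum_congr rfl fun j hj => ?_
  rw [real_inner_smul_right, if_neg (Ne.symm (Finset.ne_of_mem_erase hj))]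

private lemma sum_swap_sym {n : ℕ} (B : Matrix (Fin n) (Fin n) ℝ) (hB : ∀ i j, B i j = B j i)
    (F : Fin n → Fin n → ℝ) :
    ∑ i, ∑ j, B i j * F i j = ∑ i, ∑ j, B i j * F j i := by
  rw [Finset.sum_comm]
  exact Finset.sum_congr rfl fun i _ => Finset.sum_congr rfl fun j _ => by rw [hB]

/-- ascent achieved by a second-order step with step size
`t = ε/(15‖A‖₁)`. -/
theorem second_order_step_ascent {n r : ℕ} (hn : 0 < n) (hr : 0 < r)
    (A : Matrix (Fin n) (Fin n) ℝ) (hA : A.IsSymm) (hA0 : A ≠ 0)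
    (ε : ℝ) (hε0 : 0 < ε) (hε1 : ε ≤ 15 * Anorm1 A)
    (σ : Conf n r) (hσ : inM σ) (u : Conf n r) (hu : tangent σ u) (hun : fnormSq u = 1)
    (hG : 0 ≤ Gform A σ u) (hH : ε / 2 ≤ Hform A σ u) :
    ε ^ 3 / (2700 * Anorm1 A ^ 2) ≤ fval A (geo σ u (ε / (15 * Anorm1 A))) - fval A σ := by
  classical
  set N := Anorm1 A with hNdef
  have hcol : ∀ j, ∑ i, |A i j| ≤ N := by
    intro j
    rw [hNdef, Anorm1]
    exact le_ciSup (f := fun j => ∑ i, |A i j|) (Set.Finite.bddAbove (Set.finite_range _)) j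
  have hN : 0 < N := by
    obtain ⟨i0, j0, hij⟩ : ∃ i j, A i j ≠ 0 := by
      by_contra h
      push_neg at h
      exact hA0 (by ext i j; exact h i j)
    have hpos : 0 < ∑ k, |A k j0| :=
      Finset.sum_pos' (fun _ _ => abs_nonneg _) ⟨i0, Finset.mem_univ i0, abs_pos.mpr hij⟩
    exact lt_of_lt_of_le hpos (hcol j0)
  set t := ε / (15 * N) with htdef
  have ht0 : 0 < t := div_pos hε0 (by positivity)
  have ht1 : t ≤ 1 := by
    rw [htdef, div_le_one (by positivity)]
    simpa using hε1
  -- off-diagonal matrix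
  set B : Matrix (Fin n) (Fin n) ℝ := fun i j => if i = j then 0 else A i j with hBdef
  have hAsym : ∀ i j, A i j = A j i := fun i j => Matrix.IsSymm.apply hA j i
  have hBsym : ∀ i j, B i j = B j i := by
    intro i j
    simp only [hBdef]
    by_cases h : i = j
    · simp [h]
    · rw [if_neg h, if_neg (Ne.symm h), hAsym]
  have hBcol : ∀ j, ∑ i, |B i j| ≤ N := by
    intro j
    refine le_trans (Finset.sum_le_sum fun i _ => ?_) (hcol j)
    simp only [hBdef]
    split
    · simp [abs_nonneg]
    · exact le_rfl
  -- row norms of u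
  have ha0 : ∀ i, (0:ℝ) ≤ ‖u i‖ := fun i => norm_nonneg _
  have hasq : ∀ i, ‖u i‖^2 ≤ 1 := by
    intro i
    rw [← hun, fnormSq]
    exact Finset.single_le_sum (fun k _ => sq_nonneg ‖u k‖) (Finset.mem_univ i)
  have ha1 : ∀ i, ‖u i‖ ≤ 1 := by
    intro i
    nlinarith [hasq i, ha0 i]
  -- abbreviations for the Taylor remainders
  set D : Fin n → Fin n → ℝ := fun i j =>
    (Real.cos (‖u i‖*t) * Real.cos (‖u j‖*t) - 1 + (‖u i‖^2 + ‖u j‖^2)*t^2/2) * ⟪σ i, σ j⟫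
    + (Real.cos (‖u i‖*t) * (Real.sin (‖u j‖*t)/‖u j‖) - t) * ⟪σ i, u j⟫
    + ((Real.sin (‖u i‖*t)/‖u i‖) * Real.cos (‖u j‖*t) - t) * ⟪u i, σ j⟫
    + ((Real.sin (‖u i‖*t)/‖u i‖) * (Real.sin (‖u j‖*t)/‖u j‖) - t^2) * ⟪u i, u j⟫
    with hDdef
  -- pointwise second-order expansion
  have pid : ∀ i j, ⟪geo σ u t i, geo σ u t j⟫ - ⟪σ i, σ j⟫ =
      t * (⟪u i, σ j⟫ + ⟪σ i, u j⟫)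
      + t^2 * (⟪u i, u j⟫ - (‖u i‖^2 + ‖u j‖^2)/2 * ⟪σ i, σ j⟫)
      + D i j := by
    intro i j
    rw [inner_geo]
    simp only [hDdef]
    ring
  -- pointwise remainder bound
  have hD : ∀ i j, |D i j| ≤ 5/4 * t^3 * (‖u i‖^3 + ‖u j‖^3) := by
    intro i j
    rw [hDdef]
    refine pair_bound' ht0.le ht1 (ha0 i) (ha1 i) (ha0 j) (ha1 j) rfl rfl rfl rfl ?_ ?_ ?_ ?_
    · have := abs_real_inner_le_norm (σ i) (σ j); rw [hσ i, hσ j] at this; simpa using this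
    · have := abs_real_inner_le_norm (σ i) (u j); rw [hσ i] at this; simpa using this
    · have := abs_real_inner_le_norm (u i) (σ j); rw [hσ j] at this; simpa using this
    · exact abs_real_inner_le_norm (u i) (u j)
  -- Step A : rewrite the increment with the off-diagonal matrix B
  have stepA : fval A (geo σ u t) - fval A σ =
      ∑ i, ∑ j, B i j * (⟪geo σ u t i, geo σ u t j⟫ - ⟪σ i, σ j⟫) := by
    rw [fval, fval, ← Finset.sum_sub_distrib]
    refine Finset.sum_congr rfl fun i _ => ?_
    rw [← Finset.sum_sub_distrib]
    refine Finset.sum_congr rfl fun j _ => ?_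
    by_cases h : i = j
    · subst h
      rw [inner_geo_self σ u t hσ hu i]
      simp [hBdef]
    · simp only [hBdef, if_neg h]
      ring
  -- the gradient sum
  have SG : ∑ i, ∑ j, B i j * (⟪u i, σ j⟫ + ⟪σ i, u j⟫) = Gform A σ u := by
    have e1 : ∑ i, ∑ j, B i j * ⟪σ i, u j⟫ = ∑ i, ∑ j, B i j * ⟪u i, σ j⟫ := by
      rw [sum_swap_sym B hBsym (fun i j => ⟪σ i, u j⟫)]
      exact Finset.sum_congr rfl fun i _ => Finset.sum_congr rfl fun j _ => by
        rw [real_inner_comm]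
    have e2 : Gform A σ u = 2 * ∑ i, ∑ j, B i j * ⟪u i, σ j⟫ := by
      rw [Gform]
      congr 1
      exact Finset.sum_congr rfl fun i _ => gvec_inner A σ u i
    rw [e2]
    simp only [mul_add, Finset.sum_add_distrib, e1]
    ring
  -- the Hessian sum
  have SH : ∑ i, ∑ j, B i j * (⟪u i, u j⟫ - (‖u i‖^2 + ‖u j‖^2)/2 * ⟪σ i, σ j⟫)
      = Hform A σ u / 2 := by
    have e1 : ∑ i, ∑ j, B i j * (‖u j‖^2 * ⟪σ i, σ j⟫)
        = ∑ i, ∑ j, B i j * (‖u i‖^2 * ⟪σ i, σ j⟫) := by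
      rw [sum_swap_sym B hBsym (fun i j => ‖u j‖^2 * ⟪σ i, σ j⟫)]
      exact Finset.sum_congr rfl fun i _ => Finset.sum_congr rfl fun j _ => by
        rw [real_inner_comm]
    have e2 : Hform A σ u / 2
        = ∑ i, ∑ j, B i j * ⟪u i, u j⟫ - ∑ i, ∑ j, B i j * (‖u i‖^2 * ⟪σ i, σ j⟫) := by
      rw [Hform]
      rw [show (2:ℝ) * (∑ i, (⟪u i, gvec A u i⟫ - ‖u i‖^2 * ⟪σ i, gvec A σ i⟫)) / 2
        = ∑ i, (⟪u i, gvec A u i⟫ - ‖u i‖^2 * ⟪σ i, gvec A σ i⟫) by ring]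
      rw [Finset.sum_sub_distrib]
      congr 1
      · exact Finset.sum_congr rfl fun i _ => gvec_inner A u u i
      · refine Finset.sum_congr rfl fun i _ => ?_
        rw [gvec_inner A σ σ i, Finset.mul_sum]
        exact Finset.sum_congr rfl fun j _ => by ring
    rw [e2]
    have expand : ∀ i j, B i j * (⟪u i, u j⟫ - (‖u i‖^2 + ‖u j‖^2)/2 * ⟪σ i, σ j⟫)
        = B i j * ⟪u i, u j⟫ - (B i j * (‖u i‖^2 * ⟪σ i, σ j⟫))/2
          - (B i j * (‖u j‖^2 * ⟪σ i, σ j⟫))/2 := by intro i j; ring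
    simp only [expand, Finset.sum_sub_distrib, ← Finset.sum_div]
    rw [e1]
    ring
  -- the remainder sum
  have SD : |∑ i, ∑ j, B i j * D i j| ≤ 5/2 * N * t^3 := by
    have habs : |∑ i, ∑ j, B i j * D i j| ≤ ∑ i, ∑ j, |B i j| * |D i j| := by
      calc |∑ i, ∑ j, B i j * D i j| ≤ ∑ i, |∑ j, B i j * D i j| :=
            Finset.abs_sum_le_sum_abs _ _
        _ ≤ ∑ i, ∑ j, |B i j * D i j| :=
            Finset.sum_le_sum fun i _ => Finset.abs_sum_le_sum_abs _ _
        _ = ∑ i, ∑ j, |B i j| * |D i j| := by simp [abs_mul]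
    have hterm : ∑ i, ∑ j, |B i j| * |D i j|
        ≤ 5/4 * t^3 * (∑ i, ∑ j, |B i j| * (‖u i‖^3 + ‖u j‖^3)) := by
      rw [Finset.mul_sum]
      refine Finset.sum_le_sum fun i _ => ?_
      rw [Finset.mul_sum]
      refine Finset.sum_le_sum fun j _ => ?_
      calc |B i j| * |D i j| ≤ |B i j| * (5/4 * t^3 * (‖u i‖^3 + ‖u j‖^3)) :=
            mul_le_mul_of_nonneg_left (hD i j) (abs_nonneg _)
        _ = 5/4 * t^3 * (|B i j| * (‖u i‖^3 + ‖u j‖^3)) := by ring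
    have hsplit : ∑ i, ∑ j, |B i j| * (‖u i‖^3 + ‖u j‖^3) ≤ 2 * N := by
      have hrow : ∀ i, ∑ j, |B i j| ≤ N := by
        intro i
        calc ∑ j, |B i j| = ∑ j, |B j i| := by
              exact Finset.sum_congr rfl fun j _ => by rw [hBsym]
          _ ≤ N := hBcol i
      have s1 : ∑ i, ∑ j, |B i j| * ‖u i‖^3 ≤ N := by
        have : ∑ i, ∑ j, |B i j| * ‖u i‖^3 = ∑ i, ‖u i‖^3 * (∑ j, |B i j|) := by
          refine Finset.sum_congr rfl fun i _ => ?_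
          rw [Finset.mul_sum]
          exact Finset.sum_congr rfl fun j _ => by ring
        rw [this]
        calc ∑ i, ‖u i‖^3 * (∑ j, |B i j|) ≤ ∑ i, ‖u i‖^2 * N := by
              refine Finset.sum_le_sum fun i _ => ?_
              have h3 : ‖u i‖^3 ≤ ‖u i‖^2 := pow_le_pow_of_le_one (ha0 i) (ha1 i) (by norm_num)
              have hnn : (0:ℝ) ≤ ∑ j, |B i j| := Finset.sum_nonneg fun j _ => abs_nonneg _
              calc ‖u i‖^3 * (∑ j, |B i j|) ≤ ‖u i‖^2 * (∑ j, |B i j|) :=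
                    mul_le_mul_of_nonneg_right h3 hnn
                _ ≤ ‖u i‖^2 * N := mul_le_mul_of_nonneg_left (hrow i) (sq_nonneg _)
          _ = (∑ i, ‖u i‖^2) * N := by rw [← Finset.sum_mul]
          _ = N := by rw [show ∑ i, ‖u i‖^2 = fnormSq u from rfl, hun, one_mul]
      have s2 : ∑ i, ∑ j, |B i j| * ‖u j‖^3 ≤ N := by
        rw [Finset.sum_comm]
        have : ∑ j, ∑ i, |B i j| * ‖u j‖^3 = ∑ j, ‖u j‖^3 * (∑ i, |B i j|) := by
          refine Finset.sum_congr rfl fun j _ => ?_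
          rw [Finset.mul_sum]
          exact Finset.sum_congr rfl fun i _ => by ring
        rw [this]
        calc ∑ j, ‖u j‖^3 * (∑ i, |B i j|) ≤ ∑ j, ‖u j‖^2 * N := by
              refine Finset.sum_le_sum fun j _ => ?_
              have h3 : ‖u j‖^3 ≤ ‖u j‖^2 := pow_le_pow_of_le_one (ha0 j) (ha1 j) (by norm_num)
              have hnn : (0:ℝ) ≤ ∑ i, |B i j| := Finset.sum_nonneg fun i _ => abs_nonneg _
              calc ‖u j‖^3 * (∑ i, |B i j|) ≤ ‖u j‖^2 * (∑ i, |B i j|) :=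
                    mul_le_mul_of_nonneg_right h3 hnn
                _ ≤ ‖u j‖^2 * N := mul_le_mul_of_nonneg_left (hBcol j) (sq_nonneg _)
          _ = (∑ j, ‖u j‖^2) * N := by rw [← Finset.sum_mul]
          _ = N := by rw [show ∑ j, ‖u j‖^2 = fnormSq u from rfl, hun, one_mul]
      have : ∑ i, ∑ j, |B i j| * (‖u i‖^3 + ‖u j‖^3)
          = (∑ i, ∑ j, |B i j| * ‖u i‖^3) + ∑ i, ∑ j, |B i j| * ‖u j‖^3 := by
        rw [← Finset.sum_add_distrib]
        refine Finset.sum_congr rfl fun i _ => ?_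
        rw [← Finset.sum_add_distrib]
        exact Finset.sum_congr rfl fun j _ => by ring
      rw [this]
      linarith
    calc |∑ i, ∑ j, B i j * D i j| ≤ ∑ i, ∑ j, |B i j| * |D i j| := habs
      _ ≤ 5/4 * t^3 * (∑ i, ∑ j, |B i j| * (‖u i‖^3 + ‖u j‖^3)) := hterm
      _ ≤ 5/4 * t^3 * (2 * N) := by
          refine mul_le_mul_of_nonneg_left hsplit (by positivity)
      _ = 5/2 * N * t^3 := by ring
  -- put everything together
  have stepB : fval A (geo σ u t) - fval A σ
      = t * Gform A σ u + t^2 * (Hform A σ u / 2) + ∑ i, ∑ j, B i j * D i j := by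
    rw [stepA, ← SG, ← SH]
    simp only [Finset.mul_sum]
    rw [← Finset.sum_add_distrib, ← Finset.sum_add_distrib]
    refine Finset.sum_congr rfl fun i _ => ?_
    rw [← Finset.sum_add_distrib, ← Finset.sum_add_distrib]
    refine Finset.sum_congr rfl fun j _ => ?_
    rw [pid i j]
    ring
  have hlow : t^2 * ε / 4 - 5/2 * N * t^3 ≤ fval A (geo σ u t) - fval A σ := by
    rw [stepB]
    have h1 : 0 ≤ t * Gform A σ u := mul_nonneg ht0.le hG
    have h2 : t^2 * (ε/4) ≤ t^2 * (Hform A σ u / 2) :=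
      mul_le_mul_of_nonneg_left (by linarith) (sq_nonneg t)
    have h3 : -(5/2 * N * t^3) ≤ ∑ i, ∑ j, B i j * D i j := by
      have := neg_abs_le (∑ i, ∑ j, B i j * D i j)
      linarith [SD]
    nlinarith [h1, h2, h3]
  have heq : t^2 * ε / 4 - 5/2 * N * t^3 = ε^3 / (2700 * N^2) := by
    rw [htdef]
    field_simp
    ring
  linarith [hlow]
end
end
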